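/- arXiv:1711.09014 — 2 statements merged into one kernel-verified Lean document; each statement's English description precedes it below -/
import Mathlib

section
/- Let G be a simple connected graph on n vertices having exactly p pendant vertices, where p ≥ 2 and n ≥ p + 3. Let ℓ ≥ 0 and 0 ≤ t ≤ n−p−1 be the unique integers with p = ℓ(n−p) + t. Then Π1(G) ≤ (n+ℓ−p)^{2t} · (n+ℓ−p−1)^{2(n−p−t)}, with equality if and only if G is isomorphic to G_a, the graph obtained from the complete graph K_{n−p} by attaching ℓ+1 pendant vertices to each of t of its vertices and ℓ pendant vertices to each of the remaining n−p−t vertices. -/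
open SimpleGraph Finset

/-- Degree of a vertex (as `Nat.card` of its neighbor set). -/
noncomputable def mdeg {V : Type*} (G : SimpleGraph V) (v : V) : ℕ :=
  Nat.card (G.neighborSet v)

/-- First multiplicative Zagreb index. -/
noncomputable def mZ1 {V : Type*} [Fintype V] (G : SimpleGraph V) : ℕ :=
  ∏ v : V, (mdeg G v) ^ 2

/-- Second multiplicative Zagreb index. -/
noncomputable def mZ2 {V : Type*} [Fintype V] (G : SimpleGraph V) : ℕ :=
  ∏ v : V, (mdeg G v) ^ (mdeg G v)

/-- The graph `G_a`: the complete graph on the first `n - p` vertices, where the `p`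
pendant vertices are distributed as evenly as possible among the clique vertices
(pendant vertex `i` is attached to clique vertex `(i - (n - p)) % (n - p)`). -/
def Ga (n p : ℕ) : SimpleGraph (Fin n) :=
  SimpleGraph.fromRel (fun u v =>
    (u.val < n - p ∧ v.val < n - p) ∨
    (n - p ≤ v.val ∧ u.val = (v.val - (n - p)) % (n - p)))

/-! ### Auxiliary arithmetic lemmas -/

section Aux

lemma lemA (b k : ℕ) : (b + k) * b ^ k ≤ b * (b+1) ^ k := by
  induction k with
  | zero => simp
  | succ k ih =>
    have h1 : b ^ (k+1) ≤ b * (b+1) ^ k := by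
      rw [pow_succ']
      exact Nat.mul_le_mul_left b (Nat.pow_le_pow_left (by omega) k)
    calc (b + (k+1)) * b ^ (k+1) = (b + k) * b ^ k * b + b ^ (k+1) := by ring
      _ ≤ b * (b+1) ^ k * b + b * (b+1) ^ k :=
          Nat.add_le_add (Nat.mul_le_mul_right b ih) h1
      _ = b * (b+1) ^ (k+1) := by ring

lemma lemA_strict (b k : ℕ) (hb : 1 ≤ b) (hk : 2 ≤ k) : (b + k) * b ^ k < b * (b+1) ^ k := by
  induction k with
  | zero => omega
  | succ k ih =>
    rcases Nat.lt_or_ge k 2 with hk2 | hk2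
    · have : k = 1 := by omega
      subst this
      have h : b * (b+1) ^ (1+1) = (b + (1+1)) * b ^ (1+1) + b := by ring
      omega
    · have h1 : b ^ (k+1) ≤ b * (b+1) ^ k := by
        rw [pow_succ']
        exact Nat.mul_le_mul_left b (Nat.pow_le_pow_left (by omega) k)
      have h2 := ih hk2
      have h3 : (b + k) * b ^ k * b ≤ (b * (b+1) ^ k - 1) * b :=
        Nat.mul_le_mul_right b (by omega)
      have hb1 : 0 < b * (b+1)^k := by positivity
      calc (b + (k+1)) * b ^ (k+1) = (b + k) * b ^ k * b + b ^ (k+1) := by ring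
        _ ≤ (b * (b+1) ^ k - 1) * b + b * (b+1) ^ k := Nat.add_le_add h3 h1
        _ = b * (b+1) ^ k * b + b * (b+1) ^ k - b := by
            rw [Nat.sub_mul, Nat.sub_add_comm]; · ring_nf
            calc b = 1 * b := (one_mul b).symm
              _ ≤ b * (b+1)^k * b := Nat.mul_le_mul_right b hb1
        _ < b * (b+1) ^ k * b + b * (b+1) ^ k := by
            have : 0 < b * (b+1)^k * b := by positivity
            omega
        _ = b * (b+1) ^ (k+1) := by ring

lemma lemB (b k : ℕ) (hb : 2 ≤ b) (hk : 1 ≤ k) (hkb : k ≤ b) : (b - k) * (b+1) ^ k < b ^ (k+1) := by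
  induction k with
  | zero => omega
  | succ k ih =>
    rcases Nat.eq_or_lt_of_le hk with h1 | h1
    · have : k = 0 := by omega
      subst this
      obtain ⟨c, rfl⟩ : ∃ c, b = c + 2 := ⟨b - 2, by omega⟩
      have h : c + 2 - (0+1) = c + 1 := by omega
      rw [h]
      ring_nf
      nlinarith
    · have hk1 : 1 ≤ k := by omega
      have ihh := ih hk1 (by omega)
      have e1 : (b - (k+1)) * (b+1) ^ (k+1) + (b+1) ^ (k+1) = (b - k) * (b+1) ^ (k+1) := by
        have h : b - (k+1) + 1 = b - k := by omega
        calc (b - (k+1)) * (b+1) ^ (k+1) + (b+1) ^ (k+1)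
            = (b - (k+1) + 1) * (b+1) ^ (k+1) := by ring
          _ = (b - k) * (b+1) ^ (k+1) := by rw [h]
      have e2 : (b - k) * (b+1) ^ (k+1) = ((b - k) * (b+1) ^ k) * (b+1) := by ring
      have e3 : ((b - k) * (b+1) ^ k) * (b+1) < b ^ (k+1) * (b+1) :=
        Nat.mul_lt_mul_of_lt_of_le ihh (le_refl _) (by omega)
      have e4 : b ^ (k+1) * (b+1) ≤ b ^ (k+1+1) + (b+1) ^ (k+1) := by
        have h5 : b ^ (k+1) ≤ (b+1) ^ (k+1) := Nat.pow_le_pow_left (by omega) _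
        calc b ^ (k+1) * (b+1) = b ^ (k+1+1) + b ^ (k+1) := by ring
          _ ≤ b ^ (k+1+1) + (b+1) ^ (k+1) := by omega
      omega

lemma factor_lt (b x : ℕ) (hb : 2 ≤ b) (hx : 1 ≤ x) (h1 : x ≠ b) (h2 : x ≠ b + 1) :
    (x:ℝ) < (b:ℝ) * (((b:ℝ)+1)/b) ^ ((x:ℤ) - b) := by
  have hb0 : (0:ℝ) < b := by positivity
  have hbp : (0:ℝ) < (b:ℝ) + 1 := by positivity
  rcases Nat.lt_or_ge x b with hlt | hge
  · set k := b - x with hk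
    have hkx : (x:ℤ) - b = -(k:ℤ) := by omega
    rw [hkx, zpow_neg, zpow_natCast, div_pow, inv_div, ← mul_div_assoc]
    rw [lt_div_iff₀ (by positivity)]
    have h := lemB b k hb (by omega) (by omega)
    have hbk : b - k = x := by omega
    rw [hbk] at h
    have := (Nat.cast_lt (α := ℝ)).2 h
    push_cast at this ⊢
    calc (x:ℝ) * ((b:ℝ)+1)^k < ((b:ℝ))^(k+1) := this
      _ = (b:ℝ) * (b:ℝ)^k := by ring
  · set k := x - b with hk
    have hk2 : 2 ≤ k := by omega
    have hkx : (x:ℤ) - b = (k:ℤ) := by omega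
    rw [hkx, zpow_natCast, div_pow, ← mul_div_assoc]
    rw [lt_div_iff₀ (by positivity)]
    have h := lemA_strict b k (by omega) hk2
    have hbk : b + k = x := by omega
    rw [hbk] at h
    have := (Nat.cast_lt (α := ℝ)).2 h
    push_cast at this ⊢
    linarith

lemma factor_le (b x : ℕ) (hb : 2 ≤ b) (hx : 1 ≤ x) :
    (x:ℝ) ≤ (b:ℝ) * (((b:ℝ)+1)/b) ^ ((x:ℤ) - b) := by
  have hb0 : (0:ℝ) < b := by positivity
  rcases eq_or_ne x b with rfl | h1
  · simp
  rcases eq_or_ne x (b+1) with rfl | h2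
  · have : ((b+1:ℕ):ℤ) - (b:ℤ) = 1 := by push_cast; ring
    rw [this, zpow_one]
    rw [mul_div_assoc', mul_comm, mul_div_assoc, div_self (ne_of_gt hb0)]
    push_cast; ring_nf; simp
  · exact le_of_lt (factor_lt b x hb hx h1 h2)

lemma prod_zpow_sum {ι : Type*} (r : ℝ) (hr : r ≠ 0) (s : Finset ι) (e : ι → ℤ) :
    ∏ i ∈ s, r ^ e i = r ^ (∑ i ∈ s, e i) := by
  induction s using Finset.cons_induction with
  | empty => simp
  | cons a s ha ih => rw [prod_cons, sum_cons, ih, ← zpow_add₀ hr]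

lemma pow_mix_lt (b k t m : ℕ) (hb : 2 ≤ b) (hkt : k < t) (htm : t ≤ m) :
    (b+1)^k * b^(m-k) < (b+1)^t * b^(m-t) := by
  have h1 : m - k = (t - k) + (m - t) := by omega
  have h2 : t = k + (t - k) := by omega
  have h3 : b ^ (t-k) < (b+1) ^ (t-k) :=
    Nat.pow_lt_pow_left (by omega) (by omega)
  calc (b+1)^k * b^(m-k) = (b+1)^k * b^(t-k) * b^(m-t) := by rw [h1]; ring
    _ < (b+1)^k * (b+1)^(t-k) * b^(m-t) := by
        have hp1 : 0 < (b+1)^k := by positivity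
        have hp2 : 0 < b^(m-t) := by positivity
        exact Nat.mul_lt_mul_of_lt_of_le (Nat.mul_lt_mul_of_le_of_lt (le_refl _) h3 hp1) (le_refl _) hp2
    _ = (b+1)^t * b^(m-t) := by rw [← pow_add, ← h2]

lemma prod_balanced {ι : Type*} (s : Finset ι) (f : ι → ℕ) (b t : ℕ)
    (hb : 2 ≤ b) (hf : ∀ i ∈ s, 1 ≤ f i) (ht : t < s.card)
    (hsum : ∑ i ∈ s, f i ≤ s.card * b + t) :
    (∏ i ∈ s, f i ≤ (b+1)^t * b^(s.card - t)) ∧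
      (∏ i ∈ s, f i = (b+1)^t * b^(s.card - t) →
        (∀ i ∈ s, f i = b ∨ f i = b+1) ∧ (s.filter (fun i => f i = b+1)).card = t) := by
  classical
  set m := s.card with hm
  have hb0 : (0:ℝ) < b := by positivity
  set r : ℝ := ((b:ℝ)+1)/b with hrdef
  have hr1 : 1 < r := by
    rw [hrdef, lt_div_iff₀ hb0]; linarith
  have hr0 : r ≠ 0 := by linarith
  set g : ι → ℝ := fun i => (b:ℝ) * r ^ ((f i : ℤ) - b) with hgdef
  have hle : ∀ i ∈ s, (f i : ℝ) ≤ g i := fun i hi => factor_le b (f i) hb (hf i hi)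
  have hgprod : ∏ i ∈ s, g i = (b:ℝ)^m * r ^ ((∑ i ∈ s, (f i:ℤ)) - m * b) := by
    rw [hgdef]
    rw [Finset.prod_mul_distrib, Finset.prod_const, prod_zpow_sum r hr0]
    congr 2
    rw [Finset.sum_sub_distrib, Finset.sum_const, hm]
    push_cast
    ring
  have hexp : (∑ i ∈ s, (f i:ℤ)) - m * b ≤ (t:ℤ) := by
    have : ((∑ i ∈ s, f i : ℕ) : ℤ) ≤ ((m * b + t : ℕ) : ℤ) := by exact_mod_cast hsum
    push_cast at this
    omega
  have hrt : (r:ℝ) ^ ((∑ i ∈ s, (f i:ℤ)) - m * b) ≤ r ^ (t:ℤ) :=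
    zpow_le_zpow_right₀ (le_of_lt hr1) hexp
  have hfinal : (b:ℝ)^m * r ^ (t:ℤ) = ((b+1)^t * b^(m-t) : ℕ) := by
    rw [hrdef, zpow_natCast, div_pow]
    have hbt : (b:ℝ)^m = (b:ℝ)^(m-t) * (b:ℝ)^t := by
      rw [← pow_add]; congr 1; omega
    push_cast
    rw [hbt]
    field_simp
  have hchain : (∏ i ∈ s, (f i : ℝ)) ≤ ((b+1)^t * b^(m-t) : ℕ) := by
    calc (∏ i ∈ s, (f i : ℝ)) ≤ ∏ i ∈ s, g i := by
          apply Finset.prod_le_prod _ hle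
          intro i hi; positivity
      _ = (b:ℝ)^m * r ^ ((∑ i ∈ s, (f i:ℤ)) - m * b) := hgprod
      _ ≤ (b:ℝ)^m * r ^ (t:ℤ) := by
          apply mul_le_mul_of_nonneg_left hrt (by positivity)
      _ = _ := hfinal
  have hineq : ∏ i ∈ s, f i ≤ (b+1)^t * b^(m-t) := by
    have := hchain
    rw [← Nat.cast_prod] at this
    exact_mod_cast this
  refine ⟨hineq, fun hEq => ?_⟩
  have hall : ∀ i ∈ s, f i = b ∨ f i = b + 1 := by
    intro i hi
    by_contra hcon
    push_neg at hcon
    have hstrict : (∏ j ∈ s, (f j : ℝ)) < ∏ j ∈ s, g j := by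
      apply Finset.prod_lt_prod (fun j hj => by
        have := hf j hj; positivity) hle
      exact ⟨i, hi, factor_lt b (f i) hb (hf i hi) hcon.1 hcon.2⟩
    have : (∏ j ∈ s, (f j : ℝ)) < ((b+1)^t * b^(m-t) : ℕ) := by
      calc (∏ j ∈ s, (f j : ℝ)) < ∏ j ∈ s, g j := hstrict
        _ = _ := hgprod
        _ ≤ (b:ℝ)^m * r ^ (t:ℤ) := mul_le_mul_of_nonneg_left hrt (by positivity)
        _ = _ := hfinal
    rw [← Nat.cast_prod, ← hEq] at this
    exact lt_irrefl _ this
  refine ⟨hall, ?_⟩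
  set k := (s.filter (fun i => f i = b+1)).card with hk
  have hsplit : ∏ i ∈ s, f i = (b+1)^k * b^(m-k) := by
    rw [← Finset.prod_filter_mul_prod_filter_not s (fun i => f i = b+1)]
    have e1 : ∏ i ∈ s.filter (fun i => f i = b+1), f i = (b+1)^k := by
      rw [Finset.prod_congr rfl (fun i hi => (Finset.mem_filter.1 hi).2), Finset.prod_const]
    have e2 : ∏ i ∈ s.filter (fun i => ¬ f i = b+1), f i = b^(m-k) := by
      have hcard : (s.filter (fun i => ¬ f i = b+1)).card = m - k := by
        have := Finset.card_filter_add_card_filter_not (s := s)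
          (p := fun i => f i = b+1)
        omega
      rw [Finset.prod_congr rfl (fun i hi => ?_), Finset.prod_const, hcard]
      have hmem := Finset.mem_filter.1 hi
      rcases hall i hmem.1 with h | h
      · exact h
      · exact absurd h hmem.2
    rw [e1, e2]
  have hksum : ∑ i ∈ s, f i = m * b + k := by
    rw [← Finset.sum_filter_add_sum_filter_not s (fun i => f i = b+1)]
    have e1 : ∑ i ∈ s.filter (fun i => f i = b+1), f i = k * (b+1) := by
      rw [Finset.sum_congr rfl (fun i hi => (Finset.mem_filter.1 hi).2), Finset.sum_const, smul_eq_mul]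
    have e2 : ∑ i ∈ s.filter (fun i => ¬ f i = b+1), f i = (m-k) * b := by
      have hcard : (s.filter (fun i => ¬ f i = b+1)).card = m - k := by
        have := Finset.card_filter_add_card_filter_not (s := s)
          (p := fun i => f i = b+1)
        omega
      rw [Finset.sum_congr rfl (fun i hi => ?_), Finset.sum_const, hcard, smul_eq_mul]
      have hmem := Finset.mem_filter.1 hi
      rcases hall i hmem.1 with h | h
      · exact h
      · exact absurd h hmem.2
    rw [e1, e2]
    have hkm : k ≤ m := by
      rw [hk, hm]; exact Finset.card_filter_le _ _
    have h1 : (m - k) * b = m * b - k * b := by rw [Nat.sub_mul]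
    have h2 : k * b ≤ m * b := Nat.mul_le_mul_right b hkm
    have h3 : k * (b+1) = k * b + k := by ring
    omega
  have hkt : k ≤ t := by
    rw [hksum] at hsum
    omega
  rcases Nat.eq_or_lt_of_le hkt with h | h
  · exact h
  · exfalso
    have := pow_mix_lt b k t m hb h (by omega)
    rw [← hsplit, hEq] at this
    exact lt_irrefl _ this

lemma sum_eq_card_mul {ι : Type*} {s : Finset ι} {f : ι → ℕ} {c : ℕ}
    (h : ∀ i ∈ s, f i ≤ c) (hs : ∑ i ∈ s, f i = s.card * c) : ∀ i ∈ s, f i = c := by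
  classical
  intro i hi
  by_contra hne
  have h1 : ∑ j ∈ s.erase i, f j ≤ (s.card - 1) * c := by
    refine le_trans (Finset.sum_le_card_nsmul _ _ c (fun j hj => h j (Finset.mem_of_mem_erase hj))) ?_
    rw [Finset.card_erase_of_mem hi, smul_eq_mul]
  have h2 : f i + ∑ j ∈ s.erase i, f j = ∑ j ∈ s, f j := Finset.add_sum_erase s f hi
  have h3 : f i ≤ c := h i hi
  have hcard : 1 ≤ s.card := Finset.card_pos.2 ⟨i, hi⟩
  have h4 : (s.card - 1) * c + c = s.card * c := by
    have : s.card - 1 + 1 = s.card := by omega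
    calc (s.card - 1) * c + c = (s.card - 1 + 1) * c := by ring
      _ = s.card * c := by rw [this]
  omega

end Aux

/-! ### Counting and degrees in `Ga` -/

section GaFacts

lemma count_mod (m l t j : ℕ) (ht : t < m) (hj : j < m) :
    ((range (l * m + t)).filter (fun k => k % m = j)).card
      = l + if j < t then 1 else 0 := by
  have hm : 0 < m := by omega
  set L := l + if j < t then 1 else 0 with hL
  have himg : (range (l * m + t)).filter (fun k => k % m = j)
      = (range L).image (fun i => j + i * m) := by
    ext k
    simp only [mem_filter, mem_range, mem_image]
    constructor
    · rintro ⟨hk, hmod⟩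
      have hdm : m * (k / m) + k % m = k := Nat.div_add_mod k m
      have hcomm : (k / m) * m = m * (k / m) := Nat.mul_comm _ _
      refine ⟨k / m, ?_, ?_⟩
      · by_cases hjt : j < t
        · have : k < (l + 1) * m := by nlinarith
          have := Nat.div_lt_iff_lt_mul hm |>.2 this
          simp [hL, hjt]
          omega
        · simp only [hL, if_neg hjt]
          by_contra hcon
          push_neg at hcon
          have h1 : l * m ≤ (k / m) * m := Nat.mul_le_mul_right m hcon
          omega
      · omega
    · rintro ⟨i, hi, rfl⟩
      constructor
      · by_cases hjt : j < t
        · rw [hL, if_pos hjt] at hi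
          have : i * m ≤ l * m := Nat.mul_le_mul_right m (by omega)
          omega
        · rw [hL, if_neg hjt] at hi
          have : (i + 1) * m ≤ l * m := Nat.mul_le_mul_right m (by omega)
          nlinarith
      · rw [Nat.add_mul_mod_self_right]
        exact Nat.mod_eq_of_lt hj
  rw [himg, Finset.card_image_of_injective _ (fun a b hab => by
    exact Nat.eq_of_mul_eq_mul_right hm (by omega : a * m = b * m)), Finset.card_range]

lemma mdeg_eq_ncard {V : Type*} (G : SimpleGraph V) (v : V) :
    mdeg G v = (G.neighborSet v).ncard := Nat.card_coe_set_eq _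

lemma Ga_adj (n p : ℕ) (x y : Fin n) :
    (Ga n p).Adj x y ↔ x ≠ y ∧
      ((x.val < n - p ∧ y.val < n - p) ∨
       (n - p ≤ y.val ∧ x.val = (y.val - (n - p)) % (n - p)) ∨
       (n - p ≤ x.val ∧ y.val = (x.val - (n - p)) % (n - p))) := by
  rw [Ga, SimpleGraph.fromRel_adj]
  tauto

lemma mdeg_Ga_pendant (n p : ℕ) (hp : p ≤ n) (hm : 0 < n - p)
    (x : Fin n) (hx : n - p ≤ x.val) : mdeg (Ga n p) x = 1 := by
  set m := n - p with hmdef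
  have hmod : (x.val - m) % m < m := Nat.mod_lt _ hm
  have hjn : (x.val - m) % m < n := by omega
  have hset : (Ga n p).neighborSet x = {(⟨(x.val - m) % m, hjn⟩ : Fin n)} := by
    ext y
    simp only [SimpleGraph.mem_neighborSet, Ga_adj, Set.mem_singleton_iff, ← hmdef]
    constructor
    · rintro ⟨hne, h | h | h⟩
      · omega
      · exfalso
        have : (y.val - m) % m < m := Nat.mod_lt _ hm
        omega
      · exact Fin.ext h.2
    · rintro rfl
      refine ⟨?_, Or.inr (Or.inr ⟨hx, rfl⟩)⟩
      intro hcon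
      have := congrArg Fin.val hcon
      simp only [] at this
      omega
  rw [mdeg_eq_ncard, hset, Set.ncard_singleton]

lemma card_filter_fin (n : ℕ) (Q : ℕ → Prop) [DecidablePred Q] :
    ((univ : Finset (Fin n)).filter (fun y : Fin n => Q y.val)).card
      = ((range n).filter Q).card := by
  apply Finset.card_bij (fun y _ => y.val)
  · intro a ha
    simp only [mem_filter, mem_range] at *
    exact ⟨a.isLt, ha.2⟩
  · intro a _ b _ hab
    exact Fin.ext hab
  · intro k hk
    simp only [mem_filter, mem_range] at hk
    exact ⟨⟨k, hk.1⟩, by simp [hk.2], rfl⟩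

lemma mdeg_Ga_clique (n p l t : ℕ) (hp : p ≤ n) (hm : 0 < n - p)
    (hlt : p = l * (n - p) + t) (ht : t < n - p)
    (x : Fin n) (hx : x.val < n - p) :
    mdeg (Ga n p) x = (n - p - 1) + l + (if x.val < t then 1 else 0) := by
  classical
  set m := n - p with hmdef
  set F : Finset (Fin n) :=
    (univ.filter (fun y : Fin n => y.val ≠ x.val ∧ y.val < m)) ∪
    (univ.filter (fun y : Fin n => m ≤ y.val ∧ x.val = (y.val - m) % m)) with hF
  have hset : (Ga n p).neighborSet x = ↑F := by
    ext y
    simp only [SimpleGraph.mem_neighborSet, Ga_adj, hF, Finset.coe_union,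
      Set.mem_union, Finset.coe_filter, Set.mem_setOf_eq, Finset.mem_univ, true_and,
      ← hmdef]
    constructor
    · rintro ⟨hne, h | h | h⟩
      · exact Or.inl ⟨fun hc => hne (Fin.ext hc).symm, h.2⟩
      · exact Or.inr h
      · omega
    · rintro (⟨h1, h2⟩ | ⟨h1, h2⟩)
      · exact ⟨fun hc => h1 (congrArg Fin.val hc).symm, Or.inl ⟨hx, h2⟩⟩
      · refine ⟨by intro hc; subst hc; omega, Or.inr (Or.inl ⟨h1, h2⟩)⟩
  rw [mdeg_eq_ncard, hset, Set.ncard_coe_finset]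
  have hdisj : Disjoint
      (univ.filter (fun y : Fin n => y.val ≠ x.val ∧ y.val < m))
      (univ.filter (fun y : Fin n => m ≤ y.val ∧ x.val = (y.val - m) % m)) := by
    rw [Finset.disjoint_left]
    intro y hy1 hy2
    simp only [mem_filter] at hy1 hy2
    omega
  rw [hF, Finset.card_union_of_disjoint hdisj]
  have hc1 : (univ.filter (fun y : Fin n => y.val ≠ x.val ∧ y.val < m)).card = m - 1 := by
    rw [card_filter_fin n (fun k => k ≠ x.val ∧ k < m)]
    have : (range n).filter (fun k => k ≠ x.val ∧ k < m) = (range m).erase x.val := by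
      ext k
      simp only [mem_filter, mem_range, mem_erase]
      omega
    rw [this, Finset.card_erase_of_mem (by simp [mem_range]; omega), Finset.card_range]
  have hc2 : (univ.filter (fun y : Fin n => m ≤ y.val ∧ x.val = (y.val - m) % m)).card
      = l + if x.val < t then 1 else 0 := by
    rw [card_filter_fin n (fun k => m ≤ k ∧ x.val = (k - m) % m)]
    have himg : (range n).filter (fun k => m ≤ k ∧ x.val = (k - m) % m)
        = ((range p).filter (fun k => k % m = x.val)).image (fun k => k + m) := by
      ext k
      simp only [mem_filter, mem_range, mem_image]
      constructor
      · rintro ⟨hkn, hkm, hmod⟩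
        exact ⟨k - m, ⟨by omega, hmod.symm⟩, by omega⟩
      · rintro ⟨k', ⟨hk'p, hk'mod⟩, rfl⟩
        have : k' + m - m = k' := by omega
        rw [this]
        exact ⟨by omega, by omega, hk'mod.symm⟩
    rw [himg, Finset.card_image_of_injective _ (fun a b hab => by omega)]
    have hcm := count_mod m l t x.val (by omega) (by omega)
    have hplm : p = l * m + t := hlt
    rw [← hplm] at hcm
    exact hcm
  rw [hc1, hc2]
  omega

lemma card_filter_val_lt (n a : ℕ) (ha : a ≤ n) :
    ((univ : Finset (Fin n)).filter (fun v : Fin n => v.val < a)).card = a := by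
  rw [card_filter_fin n (fun k => k < a)]
  have : (range n).filter (fun k => k < a) = range a := by
    ext k; simp only [mem_filter, mem_range]; omega
  rw [this, Finset.card_range]

lemma mZ1_Ga (n p l t : ℕ) (hn : p + 3 ≤ n) (hp2 : 2 ≤ p)
    (hlt : p = l * (n - p) + t) (ht : t ≤ n - p - 1) :
    mZ1 (Ga n p) = (n + l - p) ^ (2*t) * (n + l - p - 1) ^ (2*(n - p - t)) := by
  classical
  rw [mZ1]
  set m := n - p with hmdef
  have hm3 : 3 ≤ m := by omega
  have hpn : p ≤ n := by omega
  have htm : t < m := by omega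
  have hdeg : ∀ v : Fin n, (mdeg (Ga n p) v)^2
      = if v.val < t then (m+l)^2 else if v.val < m then (m+l-1)^2 else 1 := by
    intro v
    by_cases h1 : v.val < t
    · rw [if_pos h1, mdeg_Ga_clique n p l t hpn (by omega) hlt htm v (by omega), if_pos h1]
      congr 1
      omega
    · rw [if_neg h1]
      by_cases h2 : v.val < m
      · rw [if_pos h2, mdeg_Ga_clique n p l t hpn (by omega) hlt htm v h2, if_neg h1]
        congr 1
        omega
      · rw [if_neg h2, mdeg_Ga_pendant n p hpn (by omega) v (by omega), one_pow]
  rw [Finset.prod_congr rfl (fun v _ => hdeg v)]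
  rw [← Finset.prod_filter_mul_prod_filter_not univ (fun v : Fin n => v.val < t)]
  have e1 : ∏ v ∈ univ.filter (fun v : Fin n => v.val < t),
      (if v.val < t then (m+l)^2 else if v.val < m then (m+l-1)^2 else 1) = ((m+l)^2)^t := by
    rw [Finset.prod_congr rfl (fun v hv => ?_), Finset.prod_const, card_filter_val_lt n t (by omega)]
    rw [if_pos (Finset.mem_filter.1 hv).2]
  rw [e1, ← Finset.prod_filter_mul_prod_filter_not
    (univ.filter (fun v : Fin n => ¬ v.val < t)) (fun v : Fin n => v.val < m)]
  have e2 : ∏ v ∈ (univ.filter (fun v : Fin n => ¬ v.val < t)).filter (fun v : Fin n => v.val < m),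
      (if v.val < t then (m+l)^2 else if v.val < m then (m+l-1)^2 else 1) = ((m+l-1)^2)^(m-t) := by
    rw [Finset.prod_congr rfl (fun v hv => ?_), Finset.prod_const]
    · congr 1
      rw [Finset.filter_filter, card_filter_fin n (fun k => ¬ k < t ∧ k < m)]
      have : (range n).filter (fun k => ¬ k < t ∧ k < m) = Ico t m := by
        ext k; simp only [mem_filter, mem_range, mem_Ico]; omega
      rw [this, Nat.card_Ico]
    · simp only [Finset.mem_filter] at hv
      rw [if_neg hv.1.2, if_pos hv.2]
  have e3 : ∏ v ∈ (univ.filter (fun v : Fin n => ¬ v.val < t)).filter (fun v : Fin n => ¬ v.val < m),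
      (if v.val < t then (m+l)^2 else if v.val < m then (m+l-1)^2 else 1) = 1 := by
    apply Finset.prod_eq_one
    intro v hv
    simp only [Finset.mem_filter] at hv
    rw [if_neg hv.1.2, if_neg hv.2]
  have g1 : n + l - p = m + l := by omega
  have g2 : n + l - p - 1 = m + l - 1 := by omega
  rw [e2, e3, mul_one, ← pow_mul, ← pow_mul, g2, g1]

lemma sum_of_two_values {ι : Type*} (s : Finset ι) (f : ι → ℕ) (b : ℕ)
    (hall : ∀ i ∈ s, f i = b ∨ f i = b+1) :
    ∑ i ∈ s, f i = s.card * b + (s.filter (fun i => f i = b+1)).card := by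
  classical
  set k := (s.filter (fun i => f i = b+1)).card with hk
  rw [← Finset.sum_filter_add_sum_filter_not s (fun i => f i = b+1)]
  have e1 : ∑ i ∈ s.filter (fun i => f i = b+1), f i = k * (b+1) := by
    rw [Finset.sum_congr rfl (fun i hi => (Finset.mem_filter.1 hi).2), Finset.sum_const, smul_eq_mul]
  have e2 : ∑ i ∈ s.filter (fun i => ¬ f i = b+1), f i = (s.card - k) * b := by
    have hcard : (s.filter (fun i => ¬ f i = b+1)).card = s.card - k := by
      have := Finset.card_filter_add_card_filter_not (s := s)
        (p := fun i => f i = b+1)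
      omega
    rw [Finset.sum_congr rfl (fun i hi => ?_), Finset.sum_const, hcard, smul_eq_mul]
    have hmem := Finset.mem_filter.1 hi
    rcases hall i hmem.1 with h | h
    · exact h
    · exact absurd h hmem.2
  rw [e1, e2]
  have hkm : k ≤ s.card := by
    rw [hk]; exact Finset.card_filter_le _ _
  have h1 : (s.card - k) * b = s.card * b - k * b := by rw [Nat.sub_mul]
  have h2 : k * b ≤ s.card * b := Nat.mul_le_mul_right b hkm
  have h3 : k * (b+1) = k * b + k := by ring
  omega

end GaFacts

theorem stmt6 (n p l t : ℕ) (hp : 2 ≤ p) (hn : p + 3 ≤ n)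
    (hlt : p = l * (n - p) + t) (ht : t ≤ n - p - 1)
    (G : SimpleGraph (Fin n)) (hG : G.Connected)
    (hpend : Nat.card {v : Fin n | mdeg G v = 1} = p) :
    mZ1 G ≤ (n + l - p) ^ (2 * t) * (n + l - p - 1) ^ (2 * (n - p - t)) ∧
      (mZ1 G = (n + l - p) ^ (2 * t) * (n + l - p - 1) ^ (2 * (n - p - t)) ↔
        Nonempty (G ≃g Ga n p)) := by
  classical
  letI : DecidableRel G.Adj := Classical.decRel _
  set m := n - p with hmdef
  have hm3 : 3 ≤ m := by omega
  have hpn : p ≤ n := by omega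
  have hmdeg : ∀ v, mdeg G v = G.degree v := by
    intro v
    rw [mdeg_eq_ncard, Set.ncard_eq_toFinset_card']
    rfl
  set P : Finset (Fin n) := univ.filter (fun v => G.degree v = 1) with hPdef
  set C : Finset (Fin n) := univ.filter (fun v => ¬ G.degree v = 1) with hCdef
  have hPmem : ∀ v, v ∈ P ↔ G.degree v = 1 := by
    intro v; simp [hPdef]
  have hCmem : ∀ v, v ∈ C ↔ ¬ G.degree v = 1 := by
    intro v; simp [hCdef]
  have hPcard : P.card = p := by
    rw [← hpend]
    have h : {v : Fin n | mdeg G v = 1} = ↑P := by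
      ext v; simp [hPdef, hmdeg v]
    rw [h, Nat.card_coe_set_eq, Set.ncard_coe_finset]
  have hPC : P.card + C.card = n := by
    rw [hPdef, hCdef, Finset.card_filter_add_card_filter_not, Finset.card_univ,
      Fintype.card_fin]
  have hCcard : C.card = m := by omega
  haveI : Nontrivial (Fin n) := Fin.nontrivial_iff_two_le.2 (by omega)
  have hdegpos : ∀ v : Fin n, 0 < G.degree v := by
    intro v
    rw [SimpleGraph.degree_pos_iff_exists_adj]
    obtain ⟨w, hw⟩ := exists_ne v
    obtain ⟨wk⟩ := hG.preconnected v w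
    cases wk with
    | nil => exact absurd rfl hw
    | cons h q => exact ⟨_, h⟩
  have hCdeg2 : ∀ v ∈ C, 2 ≤ G.degree v := by
    intro v hv
    have h1 := hdegpos v
    have h2 := (hCmem v).1 hv
    omega
  have huniq : ∀ x z w : Fin n, G.degree x = 1 → G.Adj x z → G.Adj x w → z = w := by
    intro x z w hx hz hw
    have hx' : (G.neighborFinset x).card = 1 := hx
    obtain ⟨a, ha⟩ := Finset.card_eq_one.1 hx'
    have h1 : z ∈ G.neighborFinset x := (SimpleGraph.mem_neighborFinset _ _ _).2 hz
    have h2 : w ∈ G.neighborFinset x := (SimpleGraph.mem_neighborFinset _ _ _).2 hw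
    rw [ha, Finset.mem_singleton] at h1 h2
    rw [h1, h2]
  have hnopp : ∀ u v : Fin n, G.degree u = 1 → G.degree v = 1 → ¬ G.Adj u v := by
    intro u v hu hv hadj
    obtain ⟨w, hwu, hwv⟩ : ∃ w : Fin n, w ≠ u ∧ w ≠ v := by
      by_contra hcon
      push_neg at hcon
      have hsub : (univ : Finset (Fin n)) ⊆ {u, v} := by
        intro w _
        rcases eq_or_ne w u with rfl | h
        · simp
        · simp [hcon w h]
      have h1 := Finset.card_le_card hsub
      have h2 : ({u, v} : Finset (Fin n)).card ≤ 2 :=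
        (Finset.card_insert_le u {v}).trans (by simp)
      rw [Finset.card_univ, Fintype.card_fin] at h1
      omega
    have hkey : ∀ (x y : Fin n) (wk : G.Walk x y), (x = u ∨ x = v) → (y = u ∨ y = v) := by
      intro x y wk
      induction wk with
      | nil => exact id
      | @cons x x' y h q ih =>
        intro hx
        apply ih
        rcases hx with rfl | rfl
        · right; exact huniq _ _ _ hu h hadj
        · left; exact huniq _ _ _ hv h (G.adj_symm hadj)
    obtain ⟨wk⟩ := hG.preconnected u w
    rcases hkey u w wk (Or.inl rfl) with h | h
    · exact hwu h
    · exact hwv h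
  -- degree decomposition
  set Pv : Fin n → Finset (Fin n) := fun v => P.filter (fun u => G.Adj v u) with hPvdef
  set Cv : Fin n → Finset (Fin n) := fun v => C.filter (fun u => G.Adj v u) with hCvdef
  have hdegsplit : ∀ v, G.degree v = (Cv v).card + (Pv v).card := by
    intro v
    have h1 : Cv v = (G.neighborFinset v).filter (fun u => ¬ G.degree u = 1) := by
      ext u
      simp only [hCvdef, Finset.mem_filter, hCmem, SimpleGraph.mem_neighborFinset]
      tauto
    have h2 : Pv v = (G.neighborFinset v).filter (fun u => G.degree u = 1) := by
      ext u
      simp only [hPvdef, Finset.mem_filter, hPmem, SimpleGraph.mem_neighborFinset]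
      tauto
    rw [h1, h2]
    have := Finset.card_filter_add_card_filter_not (s := G.neighborFinset v)
      (p := fun u => G.degree u = 1)
    rw [SimpleGraph.degree]
    omega
  have hCvsub : ∀ v ∈ C, Cv v ⊆ C.erase v := by
    intro v hv u hu
    simp only [hCvdef, Finset.mem_filter] at hu
    exact Finset.mem_erase.2 ⟨(G.ne_of_adj hu.2).symm, hu.1⟩
  have hCvle : ∀ v ∈ C, (Cv v).card ≤ m - 1 := by
    intro v hv
    have := Finset.card_le_card (hCvsub v hv)
    rwa [Finset.card_erase_of_mem hv, hCcard] at this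
  have hswap : ∑ v ∈ C, (Pv v).card = ∑ u ∈ P, (C.filter (fun v => G.Adj v u)).card := by
    simp only [hPvdef, Finset.card_filter]
    rw [Finset.sum_comm]
  have hBle : ∀ u ∈ P, (C.filter (fun v => G.Adj v u)).card ≤ 1 := by
    intro u hu
    have hsub : C.filter (fun v => G.Adj v u) ⊆ G.neighborFinset u := by
      intro v hv
      simp only [Finset.mem_filter] at hv
      exact (SimpleGraph.mem_neighborFinset _ _ _).2 (G.adj_symm hv.2)
    have := Finset.card_le_card hsub
    have hu1 : (G.neighborFinset u).card = 1 := (hPmem u).1 hu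
    omega
  have hsumCbound : ∑ v ∈ C, G.degree v ≤ m * (m - 1) + p := by
    have h1 : ∑ v ∈ C, G.degree v = ∑ v ∈ C, (Cv v).card + ∑ v ∈ C, (Pv v).card := by
      rw [← Finset.sum_add_distrib]
      exact Finset.sum_congr rfl (fun v _ => hdegsplit v)
    have h2 : ∑ v ∈ C, (Cv v).card ≤ m * (m - 1) := by
      calc ∑ v ∈ C, (Cv v).card ≤ C.card * (m - 1) :=
            Finset.sum_le_card_nsmul _ _ _ (fun v hv => hCvle v hv)
        _ = m * (m - 1) := by rw [hCcard]
    have h3 : ∑ v ∈ C, (Pv v).card ≤ p := by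
      rw [hswap]
      calc ∑ u ∈ P, (C.filter (fun v => G.Adj v u)).card ≤ P.card * 1 :=
            Finset.sum_le_card_nsmul _ _ _ (fun u hu => hBle u hu)
        _ = p := by rw [hPcard, mul_one]
    omega
  set b := m - 1 + l with hbdef
  have hb2 : 2 ≤ b := by omega
  have hmbt : m * (m - 1) + p = m * b + t := by
    have e1 : m * b = m * (m - 1) + m * l := by rw [hbdef, Nat.mul_add]
    have e2 : m * l = l * m := Nat.mul_comm m l
    omega
  have hCt : t < C.card := by rw [hCcard]; omega
  have hCsum : ∑ v ∈ C, G.degree v ≤ C.card * b + t := by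
    calc ∑ v ∈ C, G.degree v ≤ m * (m - 1) + p := hsumCbound
      _ = m * b + t := hmbt
      _ = C.card * b + t := by rw [hCcard]
  have happ := prod_balanced C (fun v => G.degree v) b t hb2
    (fun v hv => Nat.one_le_of_lt (hCdeg2 v hv))
    hCt hCsum
  have hprod_bound := happ.1
  rw [hCcard] at hprod_bound
  have hsplitZ : mZ1 G = (∏ v ∈ C, G.degree v) ^ 2 := by
    rw [mZ1]
    rw [Finset.prod_congr rfl (fun v _ => by rw [hmdeg v])]
    rw [← Finset.prod_filter_mul_prod_filter_not univ (fun v => G.degree v = 1)]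
    have e1 : ∏ v ∈ univ.filter (fun v => G.degree v = 1), G.degree v ^ 2 = 1 := by
      apply Finset.prod_eq_one
      intro v hv
      rw [(Finset.mem_filter.1 hv).2, one_pow]
    rw [e1, one_mul, ← hCdef, Finset.prod_pow]
  have hRHS : (n + l - p) ^ (2 * t) * (n + l - p - 1) ^ (2 * (n - p - t))
      = ((b+1)^t * b^(m-t))^2 := by
    have g1 : n + l - p = b + 1 := by omega
    have g2 : n + l - p - 1 = b := by omega
    rw [g2, g1, mul_pow, ← pow_mul, ← pow_mul, Nat.mul_comm t 2, Nat.mul_comm (m-t) 2]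
  constructor
  · rw [hsplitZ, hRHS]
    exact Nat.pow_le_pow_left hprod_bound 2
  constructor
  · -- equality implies iso
    intro hEq
    have hprodEq : ∏ v ∈ C, G.degree v = (b+1)^t * b^(m-t) := by
      apply Nat.pow_left_injective (n := 2) (by omega)
      show (∏ v ∈ C, G.degree v)^2 = ((b+1)^t * b^(m-t))^2
      rw [← hsplitZ, hEq, hRHS]
    have heqc := happ.2 (by rw [hCcard]; exact hprodEq)
    have hall : ∀ v ∈ C, G.degree v = b ∨ G.degree v = b + 1 := heqc.1
    have hHcard : (C.filter (fun v => G.degree v = b+1)).card = t := heqc.2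
    have hsumEq : ∑ v ∈ C, G.degree v = m * b + t := by
      have := sum_of_two_values C (fun v => G.degree v) b hall
      rw [hCcard, hHcard] at this
      exact this
    -- tightness of both estimates
    have hAle : ∑ v ∈ C, (Cv v).card ≤ m * (m - 1) := by
      calc ∑ v ∈ C, (Cv v).card ≤ C.card * (m - 1) :=
            Finset.sum_le_card_nsmul _ _ _ (fun v hv => hCvle v hv)
        _ = m * (m - 1) := by rw [hCcard]
    have hBle' : ∑ v ∈ C, (Pv v).card ≤ p := by
      rw [hswap]
      calc ∑ u ∈ P, (C.filter (fun v => G.Adj v u)).card ≤ P.card * 1 :=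
            Finset.sum_le_card_nsmul _ _ _ (fun u hu => hBle u hu)
        _ = p := by rw [hPcard, mul_one]
    have hdegsum : ∑ v ∈ C, G.degree v = ∑ v ∈ C, (Cv v).card + ∑ v ∈ C, (Pv v).card := by
      rw [← Finset.sum_add_distrib]
      exact Finset.sum_congr rfl (fun v _ => hdegsplit v)
    have hAeq : ∑ v ∈ C, (Cv v).card = m * (m - 1) := by omega
    have hBeq : ∑ v ∈ C, (Pv v).card = p := by omega
    have hCvEq : ∀ v ∈ C, (Cv v).card = m - 1 := by
      apply sum_eq_card_mul hCvle
      rw [hCcard]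
      exact hAeq
    have hcomplete : ∀ v ∈ C, ∀ u ∈ C, u ≠ v → G.Adj v u := by
      intro v hv u hu hne
      have h1 : Cv v = C.erase v := by
        apply Finset.eq_of_subset_of_card_le (hCvsub v hv)
        rw [Finset.card_erase_of_mem hv, hCcard, hCvEq v hv]
      have h2 : u ∈ C.erase v := Finset.mem_erase.2 ⟨hne, hu⟩
      rw [← h1] at h2
      exact (Finset.mem_filter.1 h2).2
    have hPone : ∀ u ∈ P, (C.filter (fun v => G.Adj v u)).card = 1 := by
      apply sum_eq_card_mul hBle
      rw [hPcard, mul_one, ← hswap]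
      exact hBeq
    -- the pendant neighbor function
    have hex : ∀ u : Fin n, ∃ a : Fin n, u ∈ P → G.neighborFinset u = {a} := by
      intro u
      by_cases h : u ∈ P
      · have h1 : (G.neighborFinset u).card = 1 := (hPmem u).1 h
        obtain ⟨a, ha⟩ := Finset.card_eq_one.1 h1
        exact ⟨a, fun _ => ha⟩
      · exact ⟨u, fun hc => absurd hc h⟩
    choose Nbr hNbr using hex
    have hNbrAdj : ∀ u ∈ P, G.Adj u (Nbr u) := by
      intro u hu
      have : Nbr u ∈ G.neighborFinset u := by rw [hNbr u hu]; exact Finset.mem_singleton_self _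
      exact (SimpleGraph.mem_neighborFinset _ _ _).1 this
    have hNbrUniq : ∀ u ∈ P, ∀ x, G.Adj u x → x = Nbr u := by
      intro u hu x hx
      have : x ∈ G.neighborFinset u := (SimpleGraph.mem_neighborFinset _ _ _).2 hx
      rw [hNbr u hu, Finset.mem_singleton] at this
      exact this
    have hNbrC : ∀ u ∈ P, Nbr u ∈ C := by
      intro u hu
      obtain ⟨v, hv⟩ := Finset.card_eq_one.1 (hPone u hu)
      have hvmem : v ∈ C.filter (fun v => G.Adj v u) := by rw [hv]; exact Finset.mem_singleton_self _
      have hvC := (Finset.mem_filter.1 hvmem).1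
      have hvadj := (Finset.mem_filter.1 hvmem).2
      have := hNbrUniq u hu v (G.adj_symm hvadj)
      rwa [← this]
    have hPvNbr : ∀ u ∈ P, u ∈ Pv (Nbr u) := by
      intro u hu
      exact Finset.mem_filter.2 ⟨hu, G.adj_symm (hNbrAdj u hu)⟩
    -- pendant counts
    set q : Fin n → ℕ := fun v => (Pv v).card with hqdef
    have hqdeg : ∀ v ∈ C, G.degree v = (m - 1) + q v := by
      intro v hv
      rw [hdegsplit v, hCvEq v hv]
    have hqt : ∀ v ∈ C, (G.degree v = b + 1 → q v = l + 1) ∧ (G.degree v = b → q v = l) := by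
      intro v hv
      have := hqdeg v hv
      constructor <;> intro h <;> omega
    -- the clique indexing
    set H : Finset (Fin n) := C.filter (fun v => G.degree v = b+1) with hHdef
    set L : Finset (Fin n) := C.filter (fun v => ¬ G.degree v = b+1) with hLdef
    have hHc : H.card = t := hHcard
    have hLc : L.card = m - t := by
      have h2 : H.card + L.card = C.card := by
        rw [hHdef, hLdef]
        exact Finset.card_filter_add_card_filter_not (s := C)
          (p := fun v => G.degree v = b+1)
      rw [hCcard] at h2
      have h3 : H.card = t := hHc
      omega
    have eH := (H.orderIsoOfFin hHc).toEquiv.symm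
    have eL := (L.orderIsoOfFin hLc).toEquiv.symm
    set cIdx : Fin n → ℕ := fun v =>
      if h : v ∈ H then (eH ⟨v, h⟩ : Fin t).val
      else if h : v ∈ L then t + (eL ⟨v, h⟩ : Fin (m-t)).val
      else 0 with hcIdxdef
    have hHL : ∀ v ∈ C, v ∈ H ∨ v ∈ L := by
      intro v hv
      by_cases h : G.degree v = b+1
      · exact Or.inl (Finset.mem_filter.2 ⟨hv, h⟩)
      · exact Or.inr (Finset.mem_filter.2 ⟨hv, h⟩)
    have hcIdxH : ∀ v (h : v ∈ H), cIdx v = (eH ⟨v, h⟩ : Fin t).val := by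
      intro v h
      rw [hcIdxdef]
      simp only [dif_pos h]
    have hcIdxL : ∀ v (h : v ∈ L), cIdx v = t + (eL ⟨v, h⟩ : Fin (m-t)).val := by
      intro v h
      have hnH : v ∉ H := by
        intro hc
        have h1 := (Finset.mem_filter.1 h).2
        have h2 := (Finset.mem_filter.1 hc).2
        exact h1 h2
      rw [hcIdxdef]
      simp only [dif_neg hnH, dif_pos h]
    have hcIdx_lt : ∀ v ∈ C, cIdx v < m := by
      intro v hv
      rcases hHL v hv with h | h
      · rw [hcIdxH v h]
        have := (eH ⟨v, h⟩).isLt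
        omega
      · rw [hcIdxL v h]
        have := (eL ⟨v, h⟩).isLt
        omega
    have hcIdxt : ∀ v ∈ C, (cIdx v < t ↔ G.degree v = b+1) := by
      intro v hv
      rcases hHL v hv with h | h
      · rw [hcIdxH v h]
        have := (eH ⟨v, h⟩).isLt
        simp only [this, true_iff]
        exact (Finset.mem_filter.1 h).2
      · rw [hcIdxL v h]
        constructor
        · intro hc; omega
        · intro hc; exact absurd hc (Finset.mem_filter.1 h).2
    have hcInj : ∀ u ∈ C, ∀ v ∈ C, cIdx u = cIdx v → u = v := by
      intro u hu v hv he
      rcases hHL u hu with h1 | h1 <;> rcases hHL v hv with h2 | h2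
      · rw [hcIdxH u h1, hcIdxH v h2] at he
        have : eH ⟨u, h1⟩ = eH ⟨v, h2⟩ := Fin.ext he
        have h3 := eH.injective this
        exact congrArg Subtype.val h3
      · rw [hcIdxH u h1, hcIdxL v h2] at he
        have := (eH ⟨u, h1⟩).isLt
        omega
      · rw [hcIdxL u h1, hcIdxH v h2] at he
        have := (eH ⟨v, h2⟩).isLt
        omega
      · rw [hcIdxL u h1, hcIdxL v h2] at he
        have : eL ⟨u, h1⟩ = eL ⟨v, h2⟩ := Fin.ext (by omega)
        have h3 := eL.injective this
        exact congrArg Subtype.val h3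
    -- pendant indexing
    set pIdx : Fin n → ℕ := fun u =>
      (((Pv (Nbr u)).sort (· ≤ ·)).idxOf u) with hpIdxdef
    have hpIdx_lt : ∀ u ∈ P, pIdx u < q (Nbr u) := by
      intro u hu
      rw [hpIdxdef]
      have hmem : u ∈ (Pv (Nbr u)).sort (· ≤ ·) := (Finset.mem_sort _).2 (hPvNbr u hu)
      have := List.idxOf_lt_length_iff.2 hmem
      rwa [Finset.length_sort] at this
    have hpInj : ∀ u₁ ∈ P, ∀ u₂ ∈ P, Nbr u₁ = Nbr u₂ → pIdx u₁ = pIdx u₂ → u₁ = u₂ := by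
      intro u₁ h₁ u₂ h₂ hN hpe
      rw [hpIdxdef] at hpe
      simp only [hN] at hpe
      set lst := (Pv (Nbr u₂)).sort (· ≤ ·) with hlst
      have hm₁ : u₁ ∈ lst := (Finset.mem_sort _).2 (hN ▸ hPvNbr u₁ h₁)
      have hm₂ : u₂ ∈ lst := (Finset.mem_sort _).2 (hPvNbr u₂ h₂)
      have hl₁ : lst.idxOf u₁ < lst.length := List.idxOf_lt_length_iff.2 hm₁
      have hl₂ : lst.idxOf u₂ < lst.length := List.idxOf_lt_length_iff.2 hm₂
      calc u₁ = lst.get ⟨lst.idxOf u₁, hl₁⟩ := (List.idxOf_get hl₁).symm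
        _ = lst.get ⟨lst.idxOf u₂, hl₂⟩ := by congr 1; exact Fin.ext hpe
        _ = u₂ := List.idxOf_get hl₂
    have hqcor : ∀ v ∈ C, (cIdx v < t → q v = l + 1) ∧ (¬ cIdx v < t → q v = l) := by
      intro v hv
      constructor
      · intro h
        exact (hqt v hv).1 ((hcIdxt v hv).1 h)
      · intro h
        have hd : ¬ G.degree v = b + 1 := fun hc => h ((hcIdxt v hv).2 hc)
        rcases hall v hv with h1 | h1
        · exact (hqt v hv).2 h1
        · exact absurd h1 hd
    have hPorC : ∀ x : Fin n, x ∉ C → x ∈ P := by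
      intro x hx
      by_cases h : G.degree x = 1
      · exact (hPmem x).2 h
      · exact absurd ((hCmem x).2 h) hx
    have hnmp : n = m + p := by omega
    have hplm : p = l * m + t := hlt
    have hml : m * l = l * m := Nat.mul_comm m l
    have hmn : m ≤ n := by omega
    have hpbound : ∀ x, x ∉ C → m + cIdx (Nbr x) + m * pIdx x < n := by
      intro x hx
      have hxP := hPorC x hx
      have hvC := hNbrC x hxP
      have hj := hcIdx_lt _ hvC
      have hk := hpIdx_lt x hxP
      by_cases hjt : cIdx (Nbr x) < t
      · have hq1 : q (Nbr x) = l + 1 := (hqcor _ hvC).1 hjt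
        have h5 : m * pIdx x ≤ m * l := Nat.mul_le_mul_left m (by omega)
        omega
      · have hq1 : q (Nbr x) = l := (hqcor _ hvC).2 hjt
        have hl1 : 1 ≤ l := by omega
        have h5 : m * (pIdx x + 1) ≤ m * l := Nat.mul_le_mul_left m (by omega)
        have h6 : m * (pIdx x + 1) = m * pIdx x + m := by ring
        omega
    set φ : Fin n → Fin n := fun x =>
      if hx : x ∈ C then (⟨cIdx x, lt_of_lt_of_le (hcIdx_lt x hx) hmn⟩ : Fin n)
      else ⟨m + cIdx (Nbr x) + m * pIdx x, hpbound x hx⟩ with hφdef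
    have hφC : ∀ x (hx : x ∈ C), (φ x).val = cIdx x := by
      intro x hx
      rw [hφdef]
      simp only [dif_pos hx]
    have hφP : ∀ x (hx : x ∉ C), (φ x).val = m + cIdx (Nbr x) + m * pIdx x := by
      intro x hx
      rw [hφdef]
      simp only [dif_neg hx]
    have hmod : ∀ j k : ℕ, j < m → (j + m * k) % m = j := by
      intro j k hj
      rw [Nat.add_mul_mod_self_left, Nat.mod_eq_of_lt hj]
    have hdiv : ∀ j k : ℕ, j < m → (j + m * k) / m = k := by
      intro j k hj
      rw [Nat.add_mul_div_left _ _ (by omega : 0 < m), Nat.div_eq_of_lt hj, Nat.zero_add]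
    have hφinj : Function.Injective φ := by
      intro x y hxy
      have hval := congrArg Fin.val hxy
      by_cases hx : x ∈ C <;> by_cases hy : y ∈ C
      · rw [hφC x hx, hφC y hy] at hval
        exact hcInj x hx y hy hval
      · exfalso
        rw [hφC x hx, hφP y hy] at hval
        have := hcIdx_lt x hx
        omega
      · exfalso
        rw [hφP x hx, hφC y hy] at hval
        have := hcIdx_lt y hy
        omega
      · have hxP := hPorC x hx
        have hyP := hPorC y hy
        have hjx := hcIdx_lt _ (hNbrC x hxP)
        have hjy := hcIdx_lt _ (hNbrC y hyP)
        rw [hφP x hx, hφP y hy] at hval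
        have he : cIdx (Nbr x) + m * pIdx x = cIdx (Nbr y) + m * pIdx y := by omega
        have hje : cIdx (Nbr x) = cIdx (Nbr y) := by
          calc cIdx (Nbr x) = (cIdx (Nbr x) + m * pIdx x) % m := (hmod _ _ hjx).symm
            _ = (cIdx (Nbr y) + m * pIdx y) % m := by rw [he]
            _ = cIdx (Nbr y) := hmod _ _ hjy
        have hke : pIdx x = pIdx y := by
          calc pIdx x = (cIdx (Nbr x) + m * pIdx x) / m := (hdiv _ _ hjx).symm
            _ = (cIdx (Nbr y) + m * pIdx y) / m := by rw [he]
            _ = pIdx y := hdiv _ _ hjy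
        have hNe : Nbr x = Nbr y := hcInj _ (hNbrC x hxP) _ (hNbrC y hyP) hje
        exact hpInj x hxP y hyP hNe hke
    have hφbij : Function.Bijective φ := Finite.injective_iff_bijective.1 hφinj
    refine ⟨⟨Equiv.ofBijective φ hφbij, ?_⟩⟩
    intro a b
    show (Ga n p).Adj (φ a) (φ b) ↔ G.Adj a b
    rw [Ga_adj, ← hmdef]
    by_cases ha : a ∈ C <;> by_cases hb : b ∈ C
    · -- both clique
      constructor
      · rintro ⟨hne, _⟩
        have hab : a ≠ b := fun h => hne (congrArg φ h)
        exact hcomplete a ha b hb (Ne.symm hab)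
      · intro hadj
        refine ⟨fun h => G.ne_of_adj hadj (hφinj h), Or.inl ⟨?_, ?_⟩⟩
        · rw [hφC a ha]; exact hcIdx_lt a ha
        · rw [hφC b hb]; exact hcIdx_lt b hb
    · -- a clique, b pendant
      have hbP := hPorC b hb
      have hbC := hNbrC b hbP
      constructor
      · rintro ⟨hne, h1 | h2 | h3⟩
        · exfalso
          have := h1.2
          rw [hφP b hb] at this
          omega
        · have h4 := h2.2
          rw [hφC a ha, hφP b hb] at h4
          have h5 : m + cIdx (Nbr b) + m * pIdx b - m = cIdx (Nbr b) + m * pIdx b := by omega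
          rw [h5, hmod _ _ (hcIdx_lt _ hbC)] at h4
          have hab : a = Nbr b := hcInj a ha _ hbC h4
          rw [hab]
          exact G.adj_symm (hNbrAdj b hbP)
        · exfalso
          have h4 := h3.1
          rw [hφC a ha] at h4
          have := hcIdx_lt a ha
          omega
      · intro hadj
        have hab : a = Nbr b := hNbrUniq b hbP a (G.adj_symm hadj)
        refine ⟨fun h => (G.ne_of_adj hadj) (hφinj h), Or.inr (Or.inl ⟨?_, ?_⟩)⟩
        · rw [hφP b hb]; omega
        · rw [hφC a ha, hφP b hb]
          have h5 : m + cIdx (Nbr b) + m * pIdx b - m = cIdx (Nbr b) + m * pIdx b := by omega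
          rw [h5, hmod _ _ (hcIdx_lt _ hbC), hab]
    · -- a pendant, b clique
      have haP := hPorC a ha
      have haC := hNbrC a haP
      constructor
      · rintro ⟨hne, h1 | h2 | h3⟩
        · exfalso
          have := h1.1
          rw [hφP a ha] at this
          omega
        · exfalso
          have h4 := h2.1
          rw [hφC b hb] at h4
          have h5 := hcIdx_lt b hb
          omega
        · have h4 := h3.2
          rw [hφC b hb, hφP a ha] at h4
          have h5 : m + cIdx (Nbr a) + m * pIdx a - m = cIdx (Nbr a) + m * pIdx a := by omega
          rw [h5, hmod _ _ (hcIdx_lt _ haC)] at h4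
          have hab : b = Nbr a := hcInj b hb _ haC h4
          rw [hab]
          exact hNbrAdj a haP
      · intro hadj
        have hab : b = Nbr a := hNbrUniq a haP b hadj
        refine ⟨fun h => (G.ne_of_adj hadj) (hφinj h), Or.inr (Or.inr ⟨?_, ?_⟩)⟩
        · rw [hφP a ha]; omega
        · rw [hφC b hb, hφP a ha]
          have h5 : m + cIdx (Nbr a) + m * pIdx a - m = cIdx (Nbr a) + m * pIdx a := by omega
          rw [h5, hmod _ _ (hcIdx_lt _ haC), hab]
    · -- both pendant
      have haP := hPorC a ha
      have hbP := hPorC b hb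
      constructor
      · rintro ⟨hne, h1 | h2 | h3⟩ <;> exfalso
        · have := h1.1
          rw [hφP a ha] at this
          omega
        · have h4 := h2.2
          have h5 : ((φ b).val - m) % m < m := Nat.mod_lt _ (by omega)
          have h6 := hφP a ha
          omega
        · have h4 := h3.2
          have h5 : ((φ a).val - m) % m < m := Nat.mod_lt _ (by omega)
          have h6 := hφP b hb
          omega
      · intro hadj
        exact absurd hadj (hnopp a b ((hPmem a).1 haP) ((hPmem b).1 hbP))
  · -- iso implies equality
    rintro ⟨e⟩
    have hdege : ∀ v, mdeg G v = mdeg (Ga n p) (e v) := fun v =>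
      Nat.card_congr (e.mapNeighborSet v)
    have h1 : mZ1 G = mZ1 (Ga n p) := by
      rw [mZ1, mZ1, Finset.prod_congr rfl (fun v _ => by rw [hdege v])]
      exact Fintype.prod_equiv e.toEquiv _ _ (fun v => rfl)
    rw [h1]
    exact mZ1_Ga n p l t hn hp hlt ht
end

section
/- Let G be a simple connected graph on n vertices having exactly p pendant vertices, where p ≥ 2 and n ≥ p + 3. Then Π2(G) ≤ (n−1)^{n−1} · (n−p−1)^{(n−p−1)^2}, with equality if and only if G is isomorphic to G_s, the graph obtained from the complete graph K_{n−p} by attaching all p pendant vertices to a single vertex of K_{n−p}. -/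
lemma bern (M : ℕ) : ∀ y : ℕ, (M+1)^y ≤ M^y + y * (M+1)^(y-1) := by
  intro y
  induction y with
  | zero => simp
  | succ y ih =>
    rcases Nat.eq_zero_or_pos y with hy | hy
    · subst hy; simp
    · have h1 : (M+1)^(y+1) = (M+1)^y * (M+1) := by ring
      have h2 : (M+1)^y * (M+1) ≤ (M^y + y * (M+1)^(y-1)) * (M+1) :=
        Nat.mul_le_mul_right _ ih
      have h3 : (M+1)^(y-1) * (M+1) = (M+1)^y := by
        rw [← pow_succ]; congr 1; omega
      have h4 : (M^y + y * (M+1)^(y-1)) * (M+1) = M^y * (M+1) + y * (M+1)^y := by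
        rw [add_mul, mul_assoc, h3]
      have h5 : M^y * (M+1) = M^(y+1) + M^y := by ring
      have h6 : M^y ≤ (M+1)^y := Nat.pow_le_pow_left (by omega) y
      calc (M+1)^(y+1) ≤ M^y * (M+1) + y * (M+1)^y := by omega
        _ = M^(y+1) + M^y + y * (M+1)^y := by rw [h5]
        _ ≤ M^(y+1) + (y+1) * (M+1)^((y+1)-1) := by
            simp only [Nat.add_sub_cancel]; nlinarith

lemma keyK (y : ℕ) : (y+1)^(2*y+2) < (y+2)^(y+2) * y^y := by
  rcases Nat.eq_zero_or_pos y with hy | hy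
  · subst hy; norm_num
  obtain ⟨N, hN⟩ : ∃ N, N = (y+1)^2 := ⟨_, rfl⟩
  have hNpos : 1 ≤ N := by rw [hN]; exact Nat.one_le_pow _ _ (by omega)
  have hNy : y + 1 ≤ N := by rw [hN]; nlinarith
  have hb : N^(y-1) * (N - y) ≤ (N-1)^y := by
    have h := bern (N-1) y
    rw [Nat.sub_add_cancel hNpos] at h
    have key : N^(y-1) * (N - y) + N^(y-1) * y = N^(y-1) * N := by
      rw [← mul_add]; congr 1; omega
    have hNy2 : N^y = N^(y-1) * N := by rw [← pow_succ]; congr 1; omega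
    have hc : y * N^(y-1) = N^(y-1) * y := mul_comm _ _
    omega
  have hsplit : (y+2)^(y+2) * y^y = (y+2)^2 * (N-1)^y := by
    have h1 : (y+2)^(y+2) = (y+2)^2 * (y+2)^y := by rw [← pow_add]; congr 1; omega
    rw [h1, mul_assoc, ← mul_pow]
    congr 2
    rw [hN]; ring_nf; omega
  have hLHS : (y+1)^(2*y+2) = N^2 * N^(y-1) := by
    have h1 : (y+1)^(2*y+2) = ((y+1)^2)^(y+1) := by rw [← pow_mul]; (congr 1; try omega)
    rw [h1, ← hN, ← pow_add]; congr 1; omega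
  rw [hsplit, hLHS]
  have h1 : N^2 < (y+2)^2 * (N - y) := by
    have h2 : N - y = y^2 + y + 1 := by rw [hN]; ring_nf; omega
    rw [h2, hN]; nlinarith
  calc N^2 * N^(y-1) < ((y+2)^2 * (N - y)) * N^(y-1) :=
        (Nat.mul_lt_mul_right (by positivity)).mpr h1
    _ = (y+2)^2 * (N^(y-1) * (N - y)) := by ring
    _ ≤ (y+2)^2 * (N-1)^y := Nat.mul_le_mul_left _ hb

lemma powself_pos (y : ℕ) : 0 < y^y := by
  rcases Nat.eq_zero_or_pos y with h | h
  · subst h; norm_num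
  · positivity

lemma ratioStep {x y : ℕ} (h : x ≤ y) :
    (x+1)^(x+1) * y^y ≤ x^x * (y+1)^(y+1) := by
  induction y, h using Nat.le_induction with
  | base => rw [mul_comm]
  | succ y hxy ih =>
    have hyy : 0 < y^y := powself_pos y
    apply Nat.le_of_mul_le_mul_right _ hyy
    have hK : (y+1)^(2*y+2) ≤ (y+2)^(y+2) * y^y := (keyK y).le
    calc (x+1)^(x+1) * (y+1)^(y+1) * y^y
        = (x+1)^(x+1) * y^y * (y+1)^(y+1) := by ring
      _ ≤ x^x * (y+1)^(y+1) * (y+1)^(y+1) := Nat.mul_le_mul_right _ ih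
      _ = x^x * (y+1)^(2*y+2) := by rw [mul_assoc, ← pow_add]; congr 2; omega
      _ ≤ x^x * ((y+2)^(y+2) * y^y) := Nat.mul_le_mul_left _ hK
      _ = x^x * (y+1+1)^(y+1+1) * y^y := by ring_nf
  
lemma ratioStepStrict {x y : ℕ} (h : x < y) :
    (x+1)^(x+1) * y^y < x^x * (y+1)^(y+1) := by
  induction y, h using Nat.le_induction with
  | base =>
    have hK := keyK x
    calc (x+1)^(x+1) * (x+1)^(x+1) = (x+1)^(2*x+2) := by rw [← pow_add]; congr 1; omega
      _ < (x+2)^(x+2) * x^x := hK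
      _ = x^x * (x+1+1)^(x+1+1) := by ring_nf
  | succ y hxy ih =>
    have hyy : 0 < y^y := powself_pos y
    apply Nat.lt_of_mul_lt_mul_right (a := y^y)
    have hK : (y+1)^(2*y+2) ≤ (y+2)^(y+2) * y^y := (keyK y).le
    calc (x+1)^(x+1) * (y+1)^(y+1) * y^y
        = (x+1)^(x+1) * y^y * (y+1)^(y+1) := by ring
      _ < x^x * (y+1)^(y+1) * (y+1)^(y+1) :=
          Nat.mul_lt_mul_of_lt_of_le ih (le_refl _) (by positivity)
      _ = x^x * (y+1)^(2*y+2) := by rw [mul_assoc, ← pow_add]; congr 2; omega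
      _ ≤ x^x * ((y+2)^(y+2) * y^y) := Nat.mul_le_mul_left _ hK
      _ = x^x * (y+1+1)^(y+1+1) * y^y := by ring_nf

lemma ratioMono {x y : ℕ} (h : x ≤ y) (k : ℕ) :
    (x+k)^(x+k) * y^y ≤ x^x * (y+k)^(y+k) := by
  induction k with
  | zero => simp [mul_comm]
  | succ k ih =>
    have hstep : (x+k+1)^(x+k+1) * (y+k)^(y+k) ≤ (x+k)^(x+k) * (y+k+1)^(y+k+1) :=
      ratioStep (by omega)
    have hpos : 0 < (y+k)^(y+k) := powself_pos _
    apply Nat.le_of_mul_le_mul_right _ hpos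
    calc (x+(k+1))^(x+(k+1)) * y^y * (y+k)^(y+k)
        = ((x+k+1)^(x+k+1) * (y+k)^(y+k)) * y^y := by ring_nf
      _ ≤ ((x+k)^(x+k) * (y+k+1)^(y+k+1)) * y^y :=
          Nat.mul_le_mul_right _ hstep
      _ = ((x+k)^(x+k) * y^y) * (y+k+1)^(y+k+1) := by ring
      _ ≤ (x^x * (y+k)^(y+k)) * (y+k+1)^(y+k+1) := Nat.mul_le_mul_right _ ih
      _ = x^x * (y+(k+1))^(y+(k+1)) * (y+k)^(y+k) := by ring_nf

lemma ratioMonoStrict {x y : ℕ} (h : x < y) {k : ℕ} (hk : 1 ≤ k) :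
    (x+k)^(x+k) * y^y < x^x * (y+k)^(y+k) := by
  induction k, hk using Nat.le_induction with
  | base => exact_mod_cast ratioStepStrict h
  | succ k hk1 ih =>
    have hstep : (x+k+1)^(x+k+1) * (y+k)^(y+k) ≤ (x+k)^(x+k) * (y+k+1)^(y+k+1) :=
      ratioStep (by omega)
    have hpos : 0 < (y+k)^(y+k) := powself_pos _
    apply Nat.lt_of_mul_lt_mul_right (a := (y+k)^(y+k))
    calc (x+(k+1))^(x+(k+1)) * y^y * (y+k)^(y+k)
        = ((x+k+1)^(x+k+1) * (y+k)^(y+k)) * y^y := by ring_nf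
      _ ≤ ((x+k)^(x+k) * (y+k+1)^(y+k+1)) * y^y :=
          Nat.mul_le_mul_right _ hstep
      _ = ((x+k)^(x+k) * y^y) * (y+k+1)^(y+k+1) := by ring
      _ < (x^x * (y+k)^(y+k)) * (y+k+1)^(y+k+1) :=
          Nat.mul_lt_mul_of_lt_of_le ih (le_refl _) (by positivity)
      _ = x^x * (y+(k+1))^(y+(k+1)) * (y+k)^(y+k) := by ring_nf

/-- Merge lemma: `(m+a)^(m+a) * (m+b)^(m+b) ≤ m^m * (m+a+b)^(m+a+b)`. -/
lemma mergeLe (m a b : ℕ) :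
    (m+a)^(m+a) * (m+b)^(m+b) ≤ m^m * (m+a+b)^(m+a+b) := by
  have := ratioMono (x := m) (y := m + a) (Nat.le_add_right m a) b
  calc (m+a)^(m+a) * (m+b)^(m+b) = (m+b)^(m+b) * (m+a)^(m+a) := mul_comm _ _
    _ ≤ m^m * (m+a+b)^(m+a+b) := by
        have h := ratioMono (x := m) (y := m + a) (Nat.le_add_right m a) b
        convert h using 2 <;> omega

lemma mergeLt (m : ℕ) {a b : ℕ} (ha : 1 ≤ a) (hb : 1 ≤ b) :
    (m+a)^(m+a) * (m+b)^(m+b) < m^m * (m+a+b)^(m+a+b) := by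
  have h := ratioMonoStrict (x := m) (y := m + a) (by omega) hb
  calc (m+a)^(m+a) * (m+b)^(m+b) = (m+b)^(m+b) * (m+a)^(m+a) := mul_comm _ _
    _ < m^m * (m+a+b)^(m+a+b) := by convert h using 2 <;> omega

open Finset in
lemma prodBound {V : Type*} [DecidableEq V] (m : ℕ) (s : Finset V) (hs : s.Nonempty)
    (t : V → ℕ) :
    ∏ v ∈ s, (m + t v)^(m + t v) ≤
      m^(m*(s.card - 1)) * (m + ∑ v ∈ s, t v)^(m + ∑ v ∈ s, t v) := by
  induction hs using Finset.Nonempty.cons_induction with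
  | singleton a => simp
  | cons a s ha hs ih =>
    rw [Finset.prod_cons, Finset.sum_cons, Finset.card_cons]
    obtain ⟨c, hc⟩ : ∃ c, s.card = c + 1 := ⟨s.card - 1, by have := hs.card_pos; omega⟩
    calc (m + t a)^(m + t a) * ∏ v ∈ s, (m + t v)^(m + t v)
        ≤ (m + t a)^(m + t a) *
            (m^(m*(s.card - 1)) * (m + ∑ v ∈ s, t v)^(m + ∑ v ∈ s, t v)) :=
          Nat.mul_le_mul_left _ ih
      _ = m^(m*(s.card - 1)) *
            ((m + t a)^(m + t a) * (m + ∑ v ∈ s, t v)^(m + ∑ v ∈ s, t v)) := by ring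
      _ ≤ m^(m*(s.card - 1)) *
            (m^m * (m + t a + ∑ v ∈ s, t v)^(m + t a + ∑ v ∈ s, t v)) :=
          Nat.mul_le_mul_left _ (mergeLe m (t a) _)
      _ = m^(m*(s.card + 1 - 1)) *
            (m + (t a + ∑ v ∈ s, t v))^(m + (t a + ∑ v ∈ s, t v)) := by
          rw [hc]; rw [← mul_assoc, ← pow_add]
          congr 2 <;> ring_nf <;> omega

open Finset in
lemma prodBoundStrict {V : Type*} [DecidableEq V] (m : ℕ) (hm : 1 ≤ m) (s : Finset V)
    (t : V → ℕ) {v1 v2 : V} (h1 : v1 ∈ s) (h2 : v2 ∈ s) (hne : v1 ≠ v2)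
    (ht1 : 1 ≤ t v1) (ht2 : 1 ≤ t v2) :
    ∏ v ∈ s, (m + t v)^(m + t v) <
      m^(m*(s.card - 1)) * (m + ∑ v ∈ s, t v)^(m + ∑ v ∈ s, t v) := by
  classical
  set t' : V → ℕ := fun v => if v = v2 then t v1 + t v2 else t v with ht'
  have h2' : v2 ∈ s.erase v1 := Finset.mem_erase.mpr ⟨hne.symm, h2⟩
  have hs'ne : (s.erase v1).Nonempty := ⟨v2, h2'⟩
  have hcard' : (s.erase v1).card = s.card - 1 := Finset.card_erase_of_mem h1
  have hcard2 : 2 ≤ s.card := Finset.one_lt_card.mpr ⟨v1, h1, v2, h2, hne⟩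
  have e2 : ∀ v ∈ (s.erase v1).erase v2, (m + t' v)^(m + t' v) = (m + t v)^(m + t v) := by
    intro v hv
    have : v ≠ v2 := (Finset.mem_erase.mp hv).1
    simp [ht', this]
  have e2' : ∀ v ∈ (s.erase v1).erase v2, t' v = t v := by
    intro v hv
    have : v ≠ v2 := (Finset.mem_erase.mp hv).1
    simp [ht', this]
  have hsplit : ∏ v ∈ s, (m + t v)^(m + t v) =
      (m + t v1)^(m + t v1) * ((m + t v2)^(m + t v2) *
        ∏ v ∈ (s.erase v1).erase v2, (m + t v)^(m + t v)) := by
    rw [← Finset.mul_prod_erase s _ h1, ← Finset.mul_prod_erase (s.erase v1) _ h2']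
  have hsplit' : ∏ v ∈ s.erase v1, (m + t' v)^(m + t' v) =
      (m + (t v1 + t v2))^(m + (t v1 + t v2)) *
        ∏ v ∈ (s.erase v1).erase v2, (m + t v)^(m + t v) := by
    rw [← Finset.mul_prod_erase (s.erase v1) _ h2', Finset.prod_congr rfl e2]
    congr 2 <;> simp [ht']
  have hsum' : ∑ v ∈ s.erase v1, t' v = ∑ v ∈ s, t v := by
    have a1 : ∑ v ∈ s.erase v1, t' v = t' v2 + ∑ v ∈ (s.erase v1).erase v2, t' v :=
      (Finset.add_sum_erase _ _ h2').symm
    have a2 : ∑ v ∈ s, t v = t v1 + ∑ v ∈ s.erase v1, t v :=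
      (Finset.add_sum_erase _ _ h1).symm
    have a3 : ∑ v ∈ s.erase v1, t v = t v2 + ∑ v ∈ (s.erase v1).erase v2, t v :=
      (Finset.add_sum_erase _ _ h2').symm
    have a4 : ∑ v ∈ (s.erase v1).erase v2, t' v = ∑ v ∈ (s.erase v1).erase v2, t v :=
      Finset.sum_congr rfl e2'
    have a5 : t' v2 = t v1 + t v2 := by simp [ht']
    omega
  have hprodpos : 0 < ∏ v ∈ (s.erase v1).erase v2, (m + t v)^(m + t v) := by
    apply Finset.prod_pos; intro v hv; positivity
  calc ∏ v ∈ s, (m + t v)^(m + t v)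
      = ((m + t v1)^(m + t v1) * (m + t v2)^(m + t v2)) *
          ∏ v ∈ (s.erase v1).erase v2, (m + t v)^(m + t v) := by rw [hsplit]; ring
    _ < (m^m * (m + t v1 + t v2)^(m + t v1 + t v2)) *
          ∏ v ∈ (s.erase v1).erase v2, (m + t v)^(m + t v) :=
        Nat.mul_lt_mul_of_lt_of_le (mergeLt m ht1 ht2) (le_refl _) hprodpos
    _ = m^m * ∏ v ∈ s.erase v1, (m + t' v)^(m + t' v) := by
        rw [hsplit']
        have h3 : m + t v1 + t v2 = m + (t v1 + t v2) := by omega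
        rw [h3]; ring
    _ ≤ m^m * (m^(m*((s.erase v1).card - 1)) *
          (m + ∑ v ∈ s.erase v1, t' v)^(m + ∑ v ∈ s.erase v1, t' v)) :=
        Nat.mul_le_mul_left _ (prodBound m _ hs'ne t')
    _ = m^(m*(s.card - 1)) * (m + ∑ v ∈ s, t v)^(m + ∑ v ∈ s, t v) := by
        rw [hsum', ← mul_assoc, ← pow_add, hcard']
        congr 2
        obtain ⟨k, hk⟩ : ∃ k, s.card - 1 = 1 + k := ⟨s.card - 2, by omega⟩
        rw [hk]
        have h4 : 1 + k - 1 = k := by omega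
        rw [h4]; ring

open SimpleGraph Finset

/-- The graph `G_s`: the complete graph on the first `n - p` vertices, with all `p`
pendant vertices attached to vertex `0`. -/
def Gs (n p : ℕ) : SimpleGraph (Fin n) :=
  SimpleGraph.fromRel (fun u v =>
    (u.val < n - p ∧ v.val < n - p) ∨ (u.val = 0 ∧ n - p ≤ v.val))

lemma mdeg_eq_degree {V : Type*} [Fintype V] (G : SimpleGraph V) [DecidableRel G.Adj]
    (v : V) : mdeg G v = G.degree v := by
  rw [mdeg, Nat.card_eq_fintype_card]
  exact G.card_neighborSet_eq_degree v

lemma powselfMono {a b : ℕ} (h : a ≤ b) : a^a ≤ b^b := by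
  rcases Nat.eq_zero_or_pos b with hb | hb
  · have : a = 0 := by omega
    subst this; subst hb; simp
  · calc a^a ≤ b^a := Nat.pow_le_pow_left h a
      _ ≤ b^b := Nat.pow_le_pow_right hb h

lemma powselfStrict {a b : ℕ} (ha : 1 ≤ a) (h : a < b) : a^a < b^b := by
  calc a^a ≤ b^a := Nat.pow_le_pow_left h.le a
    _ < b^b := Nat.pow_lt_pow_right (by omega) h

lemma reach_mem {V : Type*} {G : SimpleGraph V} (S : Set V)
    (hS : ∀ a ∈ S, ∀ b, G.Adj a b → b ∈ S) {u v : V} (h : G.Reachable u v)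
    (hu : u ∈ S) : v ∈ S := by
  obtain ⟨w⟩ := h
  induction w with
  | nil => exact hu
  | cons h' p ih => exact ih (hS _ hu _ h')

lemma card_val_lt {n : ℕ} (k : ℕ) (h : k ≤ n) :
    (Finset.univ.filter fun b : Fin n => (b : ℕ) < k).card = k := by
  have : (Finset.univ.filter fun b : Fin n => (b : ℕ) < k) =
      Finset.map (Fin.castLEEmb h) Finset.univ := by
    ext b
    simp only [Finset.mem_filter, Finset.mem_univ, true_and, Finset.mem_map,
      Fin.castLEEmb_apply]
    constructor
    · intro hb; exact ⟨⟨b, hb⟩, rfl⟩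
    · rintro ⟨a, rfl⟩; exact a.2.trans_le (le_refl k) |>.trans_le (le_refl k)
  rw [this, Finset.card_map, Finset.card_univ, Fintype.card_fin]

lemma Gs_adj {n p : ℕ} (a b : Fin n) :
    (Gs n p).Adj a b ↔ a ≠ b ∧ ((a.val < n-p ∧ b.val < n-p) ∨ (a.val = 0 ∧ n-p ≤ b.val)
      ∨ (b.val = 0 ∧ n-p ≤ a.val)) := by
  simp only [Gs, SimpleGraph.fromRel_adj]
  tauto

lemma Gs_degree {n p : ℕ} (hp : 2 ≤ p) (hn : p + 3 ≤ n) [DecidableRel (Gs n p).Adj]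
    (v : Fin n) :
    (Gs n p).degree v =
      if v.val = 0 then n - 1 else if v.val < n - p then n - p - 1 else 1 := by
  classical
  have hnp : 3 ≤ n - p := by omega
  have h0 : (0 : ℕ) < n := by omega
  rw [SimpleGraph.degree, SimpleGraph.neighborFinset_eq_filter]
  by_cases hv0 : v.val = 0
  · rw [if_pos hv0]
    have : Finset.univ.filter ((Gs n p).Adj v) = Finset.univ.filter (fun b => b ≠ v) := by
      apply Finset.filter_congr
      intro b _
      simp only [Gs_adj, eq_iff_iff]
      constructor
      · rintro ⟨hne, -⟩; exact hne.symm
      · intro hne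
        refine ⟨hne.symm, ?_⟩
        by_cases hb : b.val < n - p
        · exact Or.inl ⟨by omega, hb⟩
        · exact Or.inr (Or.inl ⟨hv0, by omega⟩)
    rw [this]
    have : Finset.univ.filter (fun b => b ≠ v) = Finset.univ.erase v := by
      ext b; simp [Finset.mem_erase]
    rw [this, Finset.card_erase_of_mem (Finset.mem_univ v)]
    simp
  · rw [if_neg hv0]
    by_cases hvp : v.val < n - p
    · rw [if_pos hvp]
      have : Finset.univ.filter ((Gs n p).Adj v) =
          (Finset.univ.filter (fun b : Fin n => (b : ℕ) < n - p)).erase v := by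
        ext b
        simp only [Finset.mem_filter, Finset.mem_univ, true_and, Finset.mem_erase,
          Gs_adj]
        constructor
        · rintro ⟨hne, h | h | h⟩
          · exact ⟨hne.symm, h.2⟩
          · omega
          · omega
        · rintro ⟨hne, hb⟩
          exact ⟨hne.symm, Or.inl ⟨hvp, hb⟩⟩
      rw [this, Finset.card_erase_of_mem (by simp [hvp]), card_val_lt (n-p) (by omega)]
    · rw [if_neg hvp]
      have : Finset.univ.filter ((Gs n p).Adj v) = {(⟨0, h0⟩ : Fin n)} := by
        ext b
        simp only [Finset.mem_filter, Finset.mem_univ, true_and, Finset.mem_singleton,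
          Gs_adj, Fin.ext_iff]
        constructor
        · rintro ⟨hne, h | h | h⟩ <;> omega
        · intro hb
          have hbv : v ≠ b := Fin.ne_of_val_ne (by omega)
          exact ⟨hbv, Or.inr (Or.inr ⟨hb, by omega⟩)⟩
      rw [this, Finset.card_singleton]

lemma mZ2_Gs {n p : ℕ} (hp : 2 ≤ p) (hn : p + 3 ≤ n) :
    mZ2 (Gs n p) = (n - 1) ^ (n - 1) * (n - p - 1) ^ ((n - p - 1) ^ 2) := by
  classical
  have h0 : (0:ℕ) < n := by omega
  have hnp : 3 ≤ n - p := by omega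
  letI : DecidableRel (Gs n p).Adj := Classical.decRel _
  have hD : ∀ v : Fin n, mdeg (Gs n p) v =
      if v.val = 0 then n - 1 else if v.val < n - p then n - p - 1 else 1 := by
    intro v; rw [mdeg_eq_degree, Gs_degree hp hn]
  rw [mZ2]
  rw [Finset.prod_congr rfl (fun v _ => by rw [hD v])]
  rw [← Finset.prod_filter_mul_prod_filter_not Finset.univ (fun v : Fin n => v.val = 0)]
  have e1 : Finset.univ.filter (fun v : Fin n => v.val = 0) = {(⟨0, h0⟩ : Fin n)} := by
    ext b; simp [Fin.ext_iff]
  have p1 : ∏ v ∈ Finset.univ.filter (fun v : Fin n => v.val = 0),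
      (if v.val = 0 then n - 1 else if v.val < n - p then n - p - 1 else 1) ^
      (if v.val = 0 then n - 1 else if v.val < n - p then n - p - 1 else 1)
        = (n-1)^(n-1) := by
    rw [e1, Finset.prod_singleton]; simp
  rw [p1]
  rw [← Finset.prod_filter_mul_prod_filter_not
    (Finset.univ.filter (fun v : Fin n => ¬ v.val = 0)) (fun v : Fin n => v.val < n - p)]
  have p3 : ∏ v ∈ (Finset.univ.filter (fun v : Fin n => ¬ v.val = 0)).filter
      (fun v : Fin n => ¬ v.val < n - p),
      (if v.val = 0 then n - 1 else if v.val < n - p then n - p - 1 else 1) ^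
      (if v.val = 0 then n - 1 else if v.val < n - p then n - p - 1 else 1) = 1 := by
    apply Finset.prod_eq_one
    intro v hv
    simp only [Finset.mem_filter] at hv
    rw [if_neg hv.1.2, if_neg hv.2]
    simp
  rw [p3, mul_one]
  have e2 : (Finset.univ.filter (fun v : Fin n => ¬ v.val = 0)).filter
      (fun v : Fin n => v.val < n - p) =
      (Finset.univ.filter (fun b : Fin n => (b : ℕ) < n - p)).erase ⟨0, h0⟩ := by
    ext b
    simp only [Finset.mem_filter, Finset.mem_univ, true_and, Finset.mem_erase,
      ne_eq, Fin.ext_iff, Fin.val_mk]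
    try omega
  have p2 : ∏ v ∈ (Finset.univ.filter (fun v : Fin n => ¬ v.val = 0)).filter
      (fun v : Fin n => v.val < n - p),
      (if v.val = 0 then n - 1 else if v.val < n - p then n - p - 1 else 1) ^
      (if v.val = 0 then n - 1 else if v.val < n - p then n - p - 1 else 1) =
      (n-p-1) ^ ((n-p-1)^2) := by
    rw [Finset.prod_congr rfl (g := fun _ => (n-p-1)^(n-p-1)) ?_]
    · rw [Finset.prod_const, e2, Finset.card_erase_of_mem (by simp; omega),
        card_val_lt (n-p) (by omega), ← pow_mul]
      congr 1
      ring
    · intro v hv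
      rw [e2] at hv
      simp only [Finset.mem_erase, Finset.mem_filter, Finset.mem_univ, true_and,
        ne_eq, Fin.ext_iff, Fin.val_mk] at hv
      rw [if_neg hv.1, if_pos hv.2]
  rw [p2]

lemma mZ2_iso {V W : Type*} [Fintype V] [Fintype W] {G : SimpleGraph V}
    {H : SimpleGraph W} (e : G ≃g H) : mZ2 G = mZ2 H := by
  have hd : ∀ v, mdeg G v = mdeg H (e v) := fun v => Nat.card_congr (e.mapNeighborSet v)
  rw [mZ2, mZ2, Finset.prod_congr rfl (fun v _ => by rw [hd v])]
  exact Equiv.prod_comp e.toEquiv (fun w => (mdeg H w)^(mdeg H w))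

theorem stmt7 (n p : ℕ) (hp : 2 ≤ p) (hn : p + 3 ≤ n)
    (G : SimpleGraph (Fin n)) (hG : G.Connected)
    (hpend : Nat.card {v : Fin n | mdeg G v = 1} = p) :
    mZ2 G ≤ (n - 1) ^ (n - 1) * (n - p - 1) ^ ((n - p - 1) ^ 2) ∧
      (mZ2 G = (n - 1) ^ (n - 1) * (n - p - 1) ^ ((n - p - 1) ^ 2) ↔
        Nonempty (G ≃g Gs n p)) := by
  classical
  letI : DecidableRel G.Adj := Classical.decRel _
  have h0n : (0:ℕ) < n := by omega
  have hm2 : 2 ≤ n - p - 1 := by omega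
  set P : Finset (Fin n) := Finset.univ.filter (fun v => G.degree v = 1) with hP
  set C : Finset (Fin n) := Finset.univ.filter (fun v => ¬ G.degree v = 1) with hC
  have hdeg : ∀ v, mdeg G v = G.degree v := mdeg_eq_degree G
  have hCP : ∀ v, v ∈ C ↔ v ∉ P := by intro v; simp [hP, hC]
  have hPC : ∀ v, v ∈ P ↔ G.degree v = 1 := by intro v; simp [hP]
  have hPcard : P.card = p := by
    rw [← hpend]
    have hset : {v : Fin n | mdeg G v = 1} = ↑P := by
      ext v; simp [hdeg, hP]
    rw [hset, Nat.card_coe_set_eq, Set.ncard_coe_finset]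
  have hCcard : C.card = n - p := by
    have := Finset.card_filter_add_card_filter_not
      (s := (Finset.univ : Finset (Fin n))) (p := fun v => G.degree v = 1)
    simp only [Finset.card_univ, Fintype.card_fin] at this
    rw [← hP, ← hC] at this
    omega
  have hdpos : ∀ v, 0 < G.degree v := by
    intro v
    obtain ⟨w, hw⟩ := Fintype.exists_ne_of_one_lt_card (by simp; omega) v
    rw [G.degree_pos_iff_exists_adj]
    obtain ⟨wlk⟩ := hG.preconnected v w
    cases wlk with
    | nil => exact absurd rfl hw
    | cons h' q => exact ⟨_, h'⟩
  have hC2 : ∀ v ∈ C, 2 ≤ G.degree v := by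
    intro v hv
    have h1 : ¬ G.degree v = 1 := by simpa [hC] using hv
    have := hdpos v
    omega
  -- every pendant has a unique neighbor, which is not a pendant
  have hPn : ∀ u ∈ P, ∃ w ∈ C, G.neighborFinset u = {w} := by
    intro u hu
    have hu1 : G.degree u = 1 := (hPC u).mp hu
    obtain ⟨w, hw⟩ := Finset.card_eq_one.mp (by rw [← hu1]; rfl)
    refine ⟨w, ?_, hw⟩
    have hadj_uw : G.Adj u w := by
      rw [← SimpleGraph.mem_neighborFinset, hw]; exact Finset.mem_singleton_self w
    by_contra hwC
    have hw1 : G.degree w = 1 := by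
      have hwP : w ∈ P := by
        by_contra hx
        exact hwC ((hCP w).mpr hx)
      exact (hPC w).mp hwP
    -- the unique neighbor of w is u
    obtain ⟨w', hw'⟩ := Finset.card_eq_one.mp (by rw [← hw1]; rfl)
    have hw'u : w' = u := by
      have : u ∈ G.neighborFinset w := by
        rw [SimpleGraph.mem_neighborFinset]; exact hadj_uw.symm
      rw [hw'] at this; exact (Finset.mem_singleton.mp this).symm
    -- {u, w} is closed under adjacency
    have hclosed : ∀ a ∈ ({u, w} : Set (Fin n)), ∀ b, G.Adj a b → b ∈ ({u, w} : Set (Fin n)) := by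
      rintro a (rfl | rfl) b hab
      · have : b ∈ G.neighborFinset a := by rw [SimpleGraph.mem_neighborFinset]; exact hab
        rw [hw] at this
        right; exact Finset.mem_singleton.mp this
      · have : b ∈ G.neighborFinset a := by rw [SimpleGraph.mem_neighborFinset]; exact hab
        rw [hw'] at this
        left; rw [Finset.mem_singleton.mp this, hw'u]
    have hz : ∃ z : Fin n, z ∉ ({u, w} : Finset (Fin n)) := by
      by_contra hcon
      push_neg at hcon
      have hsub : (Finset.univ : Finset (Fin n)) ⊆ {u, w} := fun z _ => hcon z
      have := Finset.card_le_card hsub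
      have h2 : ({u, w} : Finset (Fin n)).card ≤ 2 := Finset.card_insert_le _ _ |>.trans (by simp)
      simp only [Finset.card_univ, Fintype.card_fin] at this
      omega
    obtain ⟨z, hz⟩ := hz
    have : z ∈ ({u, w} : Set (Fin n)) :=
      reach_mem _ hclosed (hG.preconnected u z) (by left; rfl)
    simp only [Set.mem_insert_iff, Set.mem_singleton_iff] at this
    rcases this with rfl | rfl <;> simp at hz
  set t : Fin n → ℕ := fun v => (P.filter (G.Adj v)).card with ht
  have hsum : ∑ v ∈ C, t v = p := by
    have hswap : ∑ v ∈ C, t v = ∑ u ∈ P, (C.filter (fun v => G.Adj v u)).card := by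
      simp only [ht, Finset.card_filter]
      rw [Finset.sum_comm]
    rw [hswap]
    have hone : ∀ u ∈ P, (C.filter (fun v => G.Adj v u)).card = 1 := by
      intro u hu
      obtain ⟨w, hwC, hw⟩ := hPn u hu
      have : C.filter (fun v => G.Adj v u) = {w} := by
        ext v
        simp only [Finset.mem_filter, Finset.mem_singleton]
        constructor
        · rintro ⟨hvC, hvu⟩
          have : v ∈ G.neighborFinset u := by
            rw [SimpleGraph.mem_neighborFinset]; exact hvu.symm
          rw [hw] at this; exact Finset.mem_singleton.mp this
        · intro hvw
          rw [hvw]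
          have hwu : w ∈ G.neighborFinset u := by
            rw [hw]; exact Finset.mem_singleton_self w
          rw [SimpleGraph.mem_neighborFinset] at hwu
          exact ⟨hwC, hwu.symm⟩
      rw [this, Finset.card_singleton]
    rw [Finset.sum_congr rfl hone]
    simp [hPcard]
  have hsub : ∀ v ∈ C, G.neighborFinset v ⊆ C.erase v ∪ P.filter (G.Adj v) := by
    intro v hv x hx
    rw [SimpleGraph.mem_neighborFinset] at hx
    by_cases hxP : x ∈ P
    · exact Finset.mem_union_right _ (Finset.mem_filter.mpr ⟨hxP, hx⟩)
    · refine Finset.mem_union_left _ (Finset.mem_erase.mpr ⟨?_, (hCP x).mpr hxP⟩)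
      exact fun h => G.loopless.irrefl v (h ▸ hx)
  have hdle : ∀ v ∈ C, G.degree v ≤ (n - p - 1) + t v := by
    intro v hv
    have h1 : G.degree v ≤ (C.erase v ∪ P.filter (G.Adj v)).card :=
      Finset.card_le_card (hsub v hv)
    have h2 : (C.erase v ∪ P.filter (G.Adj v)).card ≤ (C.erase v).card + t v :=
      Finset.card_union_le _ _
    have h3 : (C.erase v).card = n - p - 1 := by
      rw [Finset.card_erase_of_mem hv, hCcard]
    omega
  have hCne : C.Nonempty := by
    rw [← Finset.card_pos, hCcard]; omega
  have hprodC : mZ2 G = ∏ v ∈ C, (G.degree v)^(G.degree v) := by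
    have h1 : ∏ v ∈ P, (G.degree v)^(G.degree v) = 1 := by
      apply Finset.prod_eq_one
      intro v hv
      rw [(hPC v).mp hv]; norm_num
    rw [mZ2, Finset.prod_congr rfl (fun v _ => by rw [hdeg v]),
      ← Finset.prod_filter_mul_prod_filter_not Finset.univ (fun v => G.degree v = 1),
      ← hP, ← hC, h1, one_mul]
  have hRHS : (n - p - 1) ^ ((n - p - 1) * (C.card - 1)) *
      ((n - p - 1) + ∑ v ∈ C, t v) ^ ((n - p - 1) + ∑ v ∈ C, t v) =
      (n - 1) ^ (n - 1) * (n - p - 1) ^ ((n - p - 1) ^ 2) := by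
    rw [hsum, hCcard]
    have e1 : n - p - 1 + p = n - 1 := by omega
    rw [e1, mul_comm]
    congr 1
    rw [pow_two]
  have hineq : mZ2 G ≤ (n - 1) ^ (n - 1) * (n - p - 1) ^ ((n - p - 1) ^ 2) := by
    rw [hprodC]
    calc ∏ v ∈ C, (G.degree v)^(G.degree v)
        ≤ ∏ v ∈ C, ((n - p - 1) + t v)^((n - p - 1) + t v) :=
          Finset.prod_le_prod' (fun v hv => powselfMono (hdle v hv))
      _ ≤ (n - p - 1) ^ ((n - p - 1) * (C.card - 1)) *
            ((n - p - 1) + ∑ v ∈ C, t v) ^ ((n - p - 1) + ∑ v ∈ C, t v) :=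
          prodBound (n - p - 1) C hCne t
      _ = _ := hRHS
  refine ⟨hineq, ?_, ?_⟩
  · intro heq
    have heqC : ∏ v ∈ C, (G.degree v)^(G.degree v) =
        (n - 1) ^ (n - 1) * (n - p - 1) ^ ((n - p - 1) ^ 2) := by
      rw [← hprodC]; exact heq
    have hEq1 : ∀ v ∈ C, G.degree v = (n - p - 1) + t v := by
      by_contra hcon
      push_neg at hcon
      obtain ⟨v0, hv0, hne⟩ := hcon
      have hlt : G.degree v0 < n - p - 1 + t v0 := lt_of_le_of_ne (hdle v0 hv0) hne
      have hstrict : ∏ v ∈ C, (G.degree v)^(G.degree v) <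
          ∏ v ∈ C, ((n - p - 1) + t v)^((n - p - 1) + t v) :=
        Finset.prod_lt_prod (fun i _ => pow_pos (hdpos i) _)
          (fun i hi => powselfMono (hdle i hi))
          ⟨v0, hv0, powselfStrict (hdpos v0) hlt⟩
      have hfin := hstrict.trans_le ((prodBound (n - p - 1) C hCne t).trans_eq hRHS)
      omega
    have hprod_t : ∏ v ∈ C, ((n - p - 1) + t v)^((n - p - 1) + t v) =
        (n - 1) ^ (n - 1) * (n - p - 1) ^ ((n - p - 1) ^ 2) := by
      rw [← Finset.prod_congr rfl (fun v hv => by rw [← hEq1 v hv])]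
      exact heqC
    have hno2 : ∀ v1 ∈ C, ∀ v2 ∈ C, v1 ≠ v2 → t v1 = 0 ∨ t v2 = 0 := by
      intro v1 h1 v2 h2 hvne
      by_contra hcon
      push_neg at hcon
      have hstrict := prodBoundStrict (n - p - 1) (by omega) C t h1 h2 hvne
        (by omega) (by omega)
      have := (hstrict.trans_eq hRHS).trans_eq hprod_t.symm
      exact lt_irrefl _ this
    have hhubex : ∃ hub ∈ C, 0 < t hub := by
      by_contra hcon
      push_neg at hcon
      have : ∑ v ∈ C, t v = 0 := Finset.sum_eq_zero (fun v hv => by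
        have := hcon v hv; omega)
      omega
    obtain ⟨hub, hhubC, hhubt⟩ := hhubex
    have hzero : ∀ v ∈ C, v ≠ hub → t v = 0 := by
      intro v hv hvne
      rcases hno2 v hv hub hhubC hvne with h | h
      · exact h
      · omega
    have hthub : t hub = p := by
      have := Finset.sum_eq_single (s := C) (f := t) hub
        (fun b hb hbne => hzero b hb hbne)
        (fun h => absurd hhubC h)
      omega
    have hNeq : ∀ v ∈ C, G.neighborFinset v = C.erase v ∪ P.filter (G.Adj v) := by
      intro v hv
      apply Finset.eq_of_subset_of_card_le (hsub v hv)
      have h2 := Finset.card_union_le (C.erase v) (P.filter (G.Adj v))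
      have h3 : (C.erase v).card = n - p - 1 := by
        rw [Finset.card_erase_of_mem hv, hCcard]
      have h4 : (P.filter (G.Adj v)).card = t v := rfl
      have h5 : (G.neighborFinset v).card = G.degree v := rfl
      have h6 := hEq1 v hv
      omega
    have hclique : ∀ u ∈ C, ∀ v ∈ C, u ≠ v → G.Adj u v := by
      intro u hu v hv huv
      have hmem : u ∈ G.neighborFinset v := by
        rw [hNeq v hv]
        exact Finset.mem_union_left _ (Finset.mem_erase.mpr ⟨huv, hu⟩)
      rw [SimpleGraph.mem_neighborFinset] at hmem
      exact hmem.symm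
    have hPhub : ∀ u ∈ P, G.Adj hub u := by
      have hfe : P.filter (G.Adj hub) = P := by
        apply Finset.eq_of_subset_of_card_le (Finset.filter_subset _ _)
        have : (P.filter (G.Adj hub)).card = t hub := rfl
        omega
      intro u hu
      rw [← hfe] at hu
      exact (Finset.mem_filter.mp hu).2
    have hPonly : ∀ u ∈ P, ∀ v, G.Adj u v → v = hub := by
      intro u hu v huv
      obtain ⟨w, hwC, hw⟩ := hPn u hu
      have h1 : v ∈ G.neighborFinset u := SimpleGraph.mem_neighborFinset _ _ _ |>.mpr huv
      have h2 : hub ∈ G.neighborFinset u :=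
        SimpleGraph.mem_neighborFinset _ _ _ |>.mpr (hPhub u hu).symm
      rw [hw] at h1 h2
      rw [Finset.mem_singleton.mp h1, ← Finset.mem_singleton.mp h2]
    have hchar : ∀ a b, G.Adj a b ↔ a ≠ b ∧ ((a ∈ C ∧ b ∈ C) ∨ (a = hub ∧ b ∈ P) ∨
        (b = hub ∧ a ∈ P)) := by
      intro a b
      constructor
      · intro hab
        refine ⟨hab.ne, ?_⟩
        by_cases haP : a ∈ P
        · exact Or.inr (Or.inr ⟨hPonly a haP b hab, haP⟩)
        by_cases hbP : b ∈ P
        · exact Or.inr (Or.inl ⟨hPonly b hbP a hab.symm, hbP⟩)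
        · exact Or.inl ⟨(hCP a).mpr haP, (hCP b).mpr hbP⟩
      · rintro ⟨hne, ⟨ha, hb⟩ | ⟨rfl, hb⟩ | ⟨rfl, ha⟩⟩
        · exact hclique a ha b hb hne
        · exact hPhub b hb
        · exact (hPhub a ha).symm
    -- build the isomorphism
    set A1 : Finset (Fin n) := C.erase hub with hA1def
    set B1 : Finset (Fin n) := Finset.univ.filter (fun v : Fin n => ¬ v.val = 0 ∧ v.val < n - p)
      with hB1def
    set B2 : Finset (Fin n) := Finset.univ.filter (fun v : Fin n => n - p ≤ v.val) with hB2def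
    have hA1card : A1.card = n - p - 1 := by
      rw [hA1def, Finset.card_erase_of_mem hhubC, hCcard]
    have hB1card : B1.card = n - p - 1 := by
      have he : B1 = (Finset.univ.filter (fun b : Fin n => (b : ℕ) < n - p)).erase ⟨0, h0n⟩ := by
        ext b
        simp only [hB1def, Finset.mem_filter, Finset.mem_univ, true_and, Finset.mem_erase,
          ne_eq, Fin.ext_iff, Fin.val_mk]
        try tauto
      rw [he, Finset.card_erase_of_mem (by simp; omega), card_val_lt (n - p) (by omega)]
    have hB2card : B2.card = p := by
      have hfc := Finset.card_filter_add_card_filter_not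
        (s := (Finset.univ : Finset (Fin n))) (p := fun b : Fin n => (b : ℕ) < n - p)
      have he : B2 = Finset.univ.filter (fun b : Fin n => ¬ (b : ℕ) < n - p) := by
        ext b
        simp only [hB2def, Finset.mem_filter, Finset.mem_univ, true_and]
        omega
      rw [card_val_lt (n - p) (by omega)] at hfc
      simp only [Finset.card_univ, Fintype.card_fin] at hfc
      rw [he]
      omega
    let e1 : {x // x ∈ A1} ≃ {x // x ∈ B1} := Finset.equivOfCardEq (by rw [hA1card, hB1card])
    let e2 : {x // x ∈ P} ≃ {x // x ∈ B2} := Finset.equivOfCardEq (by rw [hPcard, hB2card])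
    set f : Fin n → Fin n := fun x =>
      if hx1 : x ∈ A1 then (e1 ⟨x, hx1⟩ : Fin n)
      else if hx2 : x ∈ P then (e2 ⟨x, hx2⟩ : Fin n)
      else ⟨0, h0n⟩ with hf
    have htri : ∀ x : Fin n, x = hub ∨ x ∈ A1 ∨ x ∈ P := by
      intro x
      by_cases h1 : x ∈ P
      · exact Or.inr (Or.inr h1)
      by_cases h2 : x = hub
      · exact Or.inl h2
      · exact Or.inr (Or.inl (Finset.mem_erase.mpr ⟨h2, (hCP x).mpr h1⟩))
    have hfA1 : ∀ x (hx : x ∈ A1), f x = (e1 ⟨x, hx⟩ : Fin n) := by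
      intro x hx; rw [hf]; simp only [dif_pos hx]
    have hfPv : ∀ x (hx : x ∈ P), f x = (e2 ⟨x, hx⟩ : Fin n) := by
      intro x hx
      have hxA1 : x ∉ A1 := by
        rw [hA1def]
        intro hmem
        exact ((hCP x).mp (Finset.mem_of_mem_erase hmem)) hx
      rw [hf]; simp only [dif_neg hxA1, dif_pos hx]
    have hfhub : f hub = ⟨0, h0n⟩ := by
      have h1 : hub ∉ A1 := by rw [hA1def]; exact Finset.notMem_erase _ _
      have h2 : hub ∉ P := (hCP hub).mp hhubC
      rw [hf]; simp only [dif_neg h1, dif_neg h2]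
    have hB1mem : ∀ x (hx : x ∈ A1), ((e1 ⟨x, hx⟩ : Fin n) : ℕ) ≠ 0 ∧
        ((e1 ⟨x, hx⟩ : Fin n) : ℕ) < n - p := by
      intro x hx
      have h : ((e1 ⟨x, hx⟩ : Fin n)) ∈ Finset.univ.filter
          (fun v : Fin n => ¬ v.val = 0 ∧ v.val < n - p) := (e1 ⟨x, hx⟩).2
      exact (Finset.mem_filter.mp h).2
    have hB2mem : ∀ x (hx : x ∈ P), n - p ≤ ((e2 ⟨x, hx⟩ : Fin n) : ℕ) := by
      intro x hx
      have h : ((e2 ⟨x, hx⟩ : Fin n)) ∈ Finset.univ.filter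
          (fun v : Fin n => n - p ≤ v.val) := (e2 ⟨x, hx⟩).2
      exact (Finset.mem_filter.mp h).2
    have hr0 : ∀ x, (f x : ℕ) = 0 ↔ x = hub := by
      intro x
      rcases htri x with rfl | hx | hx
      · simp [hfhub]
      · rw [hfA1 x hx]
        constructor
        · intro h; exact absurd h (hB1mem x hx).1
        · intro h; exact absurd h (Finset.mem_erase.mp hx).1
      · rw [hfPv x hx]
        constructor
        · intro h; have := hB2mem x hx; omega
        · intro h
          exact absurd (h ▸ hx) ((hCP hub).mp hhubC)
    have hrC : ∀ x, (f x : ℕ) < n - p ↔ x ∈ C := by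
      intro x
      rcases htri x with rfl | hx | hx
      · rw [hfhub]
        exact iff_of_true (show (0:ℕ) < n - p by omega) hhubC
      · rw [hfA1 x hx]
        exact iff_of_true (hB1mem x hx).2 (Finset.mem_of_mem_erase hx)
      · rw [hfPv x hx]
        have h1 := hB2mem x hx
        exact iff_of_false (by omega) (fun hc => ((hCP x).mp hc) hx)
    have hrP : ∀ x, n - p ≤ (f x : ℕ) ↔ x ∈ P := by
      intro x
      rcases htri x with rfl | hx | hx
      · rw [hfhub]
        exact iff_of_false (show ¬ n - p ≤ (0:ℕ) by omega) ((hCP x).mp hhubC)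
      · rw [hfA1 x hx]
        exact iff_of_false (by have := (hB1mem x hx).2; omega)
          (fun hxP => ((hCP x).mp (Finset.mem_of_mem_erase hx)) hxP)
      · rw [hfPv x hx]
        exact iff_of_true (hB2mem x hx) hx
    have hfhub0 : (f hub : ℕ) = 0 := (hr0 hub).mpr rfl
    have hinj : Function.Injective f := by
      intro a b hab
      by_cases ha : a = hub
      · rw [ha]
        exact ((hr0 b).mp (by rw [← hab, ha]; exact hfhub0)).symm
      by_cases hb : b = hub
      · rw [hb]
        exact ((hr0 a).mp (by rw [hab, hb]; exact hfhub0))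
      rcases (htri a).resolve_left ha with ha' | ha' <;>
        rcases (htri b).resolve_left hb with hb' | hb'
      · have h1 : (e1 ⟨a, ha'⟩ : Fin n) = (e1 ⟨b, hb'⟩ : Fin n) := by
          rw [← hfA1 a ha', ← hfA1 b hb']; exact hab
        have h2 := e1.injective (Subtype.coe_injective h1)
        exact Subtype.ext_iff.mp h2
      · have h1 : (f a : ℕ) < n - p := (hrC a).mpr (Finset.mem_of_mem_erase ha')
        have h2 : n - p ≤ (f b : ℕ) := (hrP b).mpr hb'
        rw [hab] at h1; omega
      · have h1 : (f b : ℕ) < n - p := (hrC b).mpr (Finset.mem_of_mem_erase hb')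
        have h2 : n - p ≤ (f a : ℕ) := (hrP a).mpr ha'
        rw [hab] at h2; omega
      · have h1 : (e2 ⟨a, ha'⟩ : Fin n) = (e2 ⟨b, hb'⟩ : Fin n) := by
          rw [← hfPv a ha', ← hfPv b hb']; exact hab
        have h2 := e2.injective (Subtype.coe_injective h1)
        exact Subtype.ext_iff.mp h2
    have hbij : Function.Bijective f := Finite.injective_iff_bijective.mp hinj
    refine ⟨⟨Equiv.ofBijective f hbij, ?_⟩⟩
    intro a b
    show (Gs n p).Adj (f a) (f b) ↔ G.Adj a b
    rw [Gs_adj, hchar a b]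
    exact and_congr hinj.ne_iff
      (or_congr (and_congr (hrC a) (hrC b))
        (or_congr (and_congr (hr0 a) (hrP b)) (and_congr (hr0 b) (hrP a))))
  · rintro ⟨e⟩
    rw [mZ2_iso e, mZ2_Gs hp hn]
end
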